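/- Let κ ∈ ℕ, let μ be a doubling measure on ℝⁿ, and let Q be a cube with sides parallel to the coordinate axes. Let Z denote the zero set of a Q-normalized polynomial P of degree less than κ, and for 0 < δ < 1 let Z_δ := {y ∈ ℝⁿ : dist(y,Z) < δ ℓ(Q)} denote the δ-halo of Z at the scale of Q. Then there exist θ > 0 and a positive constant C_{n,κ}, depending only on n, κ and the doubling constant of μ, and not on P itself, such that |Q ∩ Z_δ|_μ ≤ C_{n,κ} δ^θ |Q|_μ for all 0 < δ < 1. In particular this power decay holds for Z = ∂Q, which is a finite union of zero sets of linear functions. -/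

import Mathlib

open MeasureTheory Set
open scoped ENNReal NNReal BigOperators

noncomputable section

/-- Points of `ℝⁿ`. -/
abbrev Pt (n : ℕ) := EuclideanSpace ℝ (Fin n)

/-- An axis-parallel cube in `ℝⁿ`, recorded by its center and side length. -/
structure Cube (n : ℕ) where
  center : Pt n
  side : ℝ

namespace Cube

variable {n : ℕ}

/-- The underlying (closed) set of an axis-parallel cube. -/
def toSet (Q : Cube n) : Set (Pt n) :=
  {x : Pt n | ∀ i : Fin n, |x i - Q.center i| ≤ Q.side / 2}

/-- The concentric dilate `tQ` of a cube `Q`. -/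
def dilate (Q : Cube n) (t : ℝ) : Cube n :=
  ⟨Q.center, t * Q.side⟩

end Cube

/-- `μ` is doubling with doubling constant `C`:  `|2Q|_μ ≤ C |Q|_μ` for all cubes. -/
def IsDoubling {n : ℕ} (μ : Measure (Pt n)) (C : ℝ) : Prop :=
  ∀ Q : Cube n, 0 < Q.side → μ (Q.dilate 2).toSet ≤ ENNReal.ofReal C * μ Q.toSet

/-- `μ` has doubling exponent `θ`, valid for dilation factors `t ≥ t₀`. -/
def HasDoubExpFrom {n : ℕ} (μ : Measure (Pt n)) (θ t₀ : ℝ) : Prop :=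
  ∀ Q : Cube n, 0 < Q.side → ∀ t : ℝ, t₀ ≤ t →
    μ (Q.dilate t).toSet ≤ ENNReal.ofReal (t ^ θ) * μ Q.toSet

/-- `μ` has reverse doubling exponent `θ`, valid for dilation factors `0 < t ≤ t₀`. -/
def HasRevDoubExpFrom {n : ℕ} (μ : Measure (Pt n)) (θ t₀ : ℝ) : Prop :=
  ∀ Q : Cube n, 0 < Q.side → ∀ t : ℝ, 0 < t → t ≤ t₀ →
    μ (Q.dilate t).toSet ≤ ENNReal.ofReal (t ^ θ) * μ Q.toSet

/-- `μ` has reverse doubling exponent `θ` for all sufficiently small dilation factors. -/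
def HasRevDoubExp {n : ℕ} (μ : Measure (Pt n)) (θ : ℝ) : Prop :=
  ∃ t₀ : ℝ, 0 < t₀ ∧ HasRevDoubExpFrom μ θ t₀

/-- The square of the continuous homogeneous weighted Sobolev norm `‖f‖__{W^s(μ)}`:
`∬ ((f(x)-f(y))/|x-y|^s)² dμ(x)dμ(y) / |B((x+y)/2,|x-y|/2)|_μ`. -/
def contSobolevNormSq {n : ℕ} (μ : Measure (Pt n)) (s : ℝ) (f : Pt n → ℝ) : ℝ≥0∞ :=
  ∫⁻ x, ∫⁻ y,
    ENNReal.ofReal ((f x - f y) ^ 2 / ‖x - y‖ ^ (2 * s)) /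
      μ (Metric.ball (midpoint ℝ x y) (‖x - y‖ / 2)) ∂μ ∂μ

/-- An abstract dyadic grid on `ℝⁿ`: a collection of cubes of dyadic side lengths,
organized by a parent map, with the usual nesting and covering properties. -/
structure DyadicGrid (n : ℕ) where
  mem : Cube n → Prop
  parent : Cube n → Cube n
  side_pos : ∀ Q, mem Q → 0 < Q.side
  side_pow : ∀ Q, mem Q → ∃ k : ℤ, Q.side = 2 ^ k
  parent_mem : ∀ Q, mem Q → mem (parent Q)
  parent_side : ∀ Q, mem Q → (parent Q).side = 2 * Q.side
  subset_parent : ∀ Q, mem Q → Q.toSet ⊆ (parent Q).toSet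
  nested : ∀ Q Q', mem Q → mem Q' → Q.side ≤ Q'.side →
    Q.toSet ⊆ Q'.toSet ∨ Disjoint (interior Q.toSet) (interior Q'.toSet)
  covers : ∀ (k : ℤ) (x : Pt n), ∃ Q, mem Q ∧ Q.side = 2 ^ k ∧ x ∈ Q.toSet

namespace DyadicGrid

variable {n : ℕ}

/-- The dyadic children of a cube in a grid. -/
def children (D : DyadicGrid n) (Q : Cube n) : Set (Cube n) :=
  {Q' | D.mem Q' ∧ D.parent Q' = Q}

/-- The `m`-fold dyadic ancestor `π^{(m)} Q`. -/
def ancestor (D : DyadicGrid n) (m : ℕ) (Q : Cube n) : Cube n :=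
  D.parent^[m] Q

end DyadicGrid

/-- `p : ℝⁿ → ℝ` is a polynomial of degree `< κ`. -/
def IsPolyDegLt {n : ℕ} (κ : ℕ) (p : Pt n → ℝ) : Prop :=
  ∃ P : MvPolynomial (Fin n) ℝ, P.totalDegree < κ ∧
    ∀ x : Pt n, p x = MvPolynomial.eval (fun i => x i) P

/-- Membership in the weighted Alpert space `L²_{Q;κ}(μ)`: supported in `Q`, equal to a
polynomial of degree `< κ` on each dyadic child of `Q`, and with vanishing `μ`-moments
of order `< κ`. -/
def MemAlpertSpace {n : ℕ} (μ : Measure (Pt n)) (D : DyadicGrid n) (κ : ℕ) (Q : Cube n)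
    (f : Pt n → ℝ) : Prop :=
  Measurable f ∧ MemLp f 2 μ ∧
    (∀ᵐ x ∂μ, x ∉ Q.toSet → f x = 0) ∧
    (∀ Q' ∈ D.children Q, ∃ p, IsPolyDegLt κ p ∧ ∀ᵐ x ∂μ, x ∈ Q'.toSet → f x = p x) ∧
    (∀ β : Fin n → ℕ, (∑ i, β i) < κ → ∫ x, f x * (∏ i, x i ^ β i) ∂μ = 0)

/-- `g` is the orthogonal projection in `L²(μ)` of `f` onto the Alpert space
`L²_{Q;κ}(μ)`, i.e. `g = △_{Q;κ}^μ f`. -/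
def IsAlpertProj {n : ℕ} (μ : Measure (Pt n)) (D : DyadicGrid n) (κ : ℕ) (Q : Cube n)
    (f g : Pt n → ℝ) : Prop :=
  MemAlpertSpace μ D κ Q g ∧
    ∀ h, MemAlpertSpace μ D κ Q h → ∫ x, (f x - g x) * h x ∂μ = 0

/-- A coherent choice of the weighted Alpert projections `△_{Q;κ}^μ` for all cubes
of the grid `D`. -/
structure AlpertSystem {n : ℕ} (μ : Measure (Pt n)) (D : DyadicGrid n) (κ : ℕ) where
  proj : Cube n → (Pt n → ℝ) → Pt n → ℝ
  proj_measurable : ∀ Q f, Measurable (proj Q f)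
  isProj : ∀ Q, D.mem Q → ∀ f : Pt n → ℝ, Measurable f → MemLp f 2 μ →
    IsAlpertProj μ D κ Q f (proj Q f)

/-- The squared dyadic weighted Sobolev norm
`‖f‖²_{W^s_{D;κ}(μ)} = Σ_{Q∈D} ℓ(Q)^{-2s} ‖△_{Q;κ}^μ f‖²_{L²(μ)}`. -/
def sobNormSq {n : ℕ} {μ : Measure (Pt n)} {D : DyadicGrid n} {κ : ℕ}
    (A : AlpertSystem μ D κ) (s : ℝ) (f : Pt n → ℝ) : ℝ≥0∞ :=
  ∑' Q : {Q : Cube n // D.mem Q},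
    ENNReal.ofReal (Q.1.side ^ (-(2 * s))) *
      ∫⁻ x, ENNReal.ofReal (A.proj Q.1 f x ^ 2) ∂μ

/-- Membership in `Span{1_Q x^β : |β| < κ} ⊂ L²(μ)`. -/
def MemPolySpace {n : ℕ} (μ : Measure (Pt n)) (κ : ℕ) (Q : Cube n) (f : Pt n → ℝ) : Prop :=
  Measurable f ∧ MemLp f 2 μ ∧ (∀ᵐ x ∂μ, x ∉ Q.toSet → f x = 0) ∧
    ∃ p, IsPolyDegLt κ p ∧ ∀ᵐ x ∂μ, x ∈ Q.toSet → f x = p x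

/-- `g` is the orthogonal projection in `L²(μ)` of `f` onto `Span{1_Q x^β : |β| < κ}`,
i.e. `g = 𝔼_{Q;κ}^μ f`. -/
def IsPolyProj {n : ℕ} (μ : Measure (Pt n)) (κ : ℕ) (Q : Cube n) (f g : Pt n → ℝ) : Prop :=
  MemPolySpace μ κ Q g ∧ ∀ h, MemPolySpace μ κ Q h → ∫ x, (f x - g x) * h x ∂μ = 0

/-- A coherent choice of the projections `𝔼_{Q;κ}^μ` for all cubes. -/
structure PolyProjSystem {n : ℕ} (μ : Measure (Pt n)) (κ : ℕ) where
  proj : Cube n → (Pt n → ℝ) → Pt n → ℝ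
  isProj : ∀ (Q : Cube n) (f : Pt n → ℝ), Measurable f → MemLp f 2 μ →
    IsPolyProj μ κ Q f (proj Q f)

/-- The squared difference Sobolev norm
`‖f‖²_{W^s_{D_diff;κ}(μ)} = Σ_{Q∈D} ∫_Q |(f - 𝔼_{Q;κ}^μ f)/ℓ(Q)^s|² dμ`. -/
def diffNormSq {n : ℕ} {μ : Measure (Pt n)} {κ : ℕ} (D : DyadicGrid n)
    (E : PolyProjSystem μ κ) (s : ℝ) (f : Pt n → ℝ) : ℝ≥0∞ :=
  ∑' Q : {Q : Cube n // D.mem Q},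
    ENNReal.ofReal (Q.1.side ^ (-(2 * s))) *
      ∫⁻ x in Q.1.toSet, ENNReal.ofReal ((f x - E.proj Q.1 f x) ^ 2) ∂μ

/-- The `μ`-average `E_Q^μ f` of `f` on a cube `Q`. -/
def cubeAvg {n : ℕ} (μ : Measure (Pt n)) (Q : Cube n) (f : Pt n → ℝ) : ℝ :=
  (∫ x in Q.toSet, f x ∂μ) / (μ Q.toSet).toReal

/-- The squared difference Sobolev norm of order one (`κ = 1`),
`‖f‖²_{W^s_{D_diff;1}(μ)} = Σ_{Q∈D} ∫_Q |(f - E_Q^μ f)/ℓ(Q)^s|² dμ`. -/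
def diffNormSqOne {n : ℕ} (μ : Measure (Pt n)) (D : DyadicGrid n) (s : ℝ)
    (f : Pt n → ℝ) : ℝ≥0∞ :=
  ∑' Q : {Q : Cube n // D.mem Q},
    ENNReal.ofReal (Q.1.side ^ (-(2 * s))) *
      ∫⁻ x in Q.1.toSet, ENNReal.ofReal ((f x - cubeAvg μ Q.1 f) ^ 2) ∂μ

/-- The `m`-th order `α`-fractional Poisson integral `P_m^α(Q,μ)`. -/
def poisson {n : ℕ} (m α : ℝ) (Q : Cube n) (μ : Measure (Pt n)) : ℝ≥0∞ :=
  ∫⁻ y, ENNReal.ofReal (Q.side ^ m / (Q.side + ‖y - Q.center‖) ^ ((n : ℝ) + m - α)) ∂μ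

/-- The fractional Muckenhoupt constant
`A₂^α(σ,ω) = sup_Q |Q|_ω |Q|_σ / |Q|^{2(1-α/n)}`. -/
def A2Const (n : ℕ) (α : ℝ) (σ ω : Measure (Pt n)) : ℝ≥0∞ :=
  ⨆ (Q : Cube n) (_ : 0 < Q.side),
    ω Q.toSet * σ Q.toSet / ENNReal.ofReal (Q.side ^ (2 * ((n : ℝ) - α)))

/-- A smooth `α`-fractional Calderón–Zygmund kernel with size/smoothness constants `C j`:
`|∇_x^j K(x,y)| + |∇_y^j K(x,y)| ≤ C_j |x-y|^{α-j-n}` for all `j ≥ 0`. -/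
def IsCZKernel (n : ℕ) (α : ℝ) (C : ℕ → ℝ) (K : Pt n → Pt n → ℝ) : Prop :=
  Measurable (Function.uncurry K) ∧
    ∀ (j : ℕ) (x y : Pt n), x ≠ y →
      ‖iteratedFDeriv ℝ j (fun z => K z y) x‖ + ‖iteratedFDeriv ℝ j (fun z => K x z) y‖ ≤
        C j * ‖x - y‖ ^ (α - (j : ℝ) - (n : ℝ))

/-- An admissibly truncated smooth `α`-fractional Calderón–Zygmund kernel: it satisfies
the Calderón–Zygmund estimates and vanishes near the diagonal and near infinity. -/
def IsTruncatedCZKernel (n : ℕ) (α : ℝ) (C : ℕ → ℝ) (K : Pt n → Pt n → ℝ) : Prop :=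
  IsCZKernel n α C K ∧
    ∃ δ R : ℝ, 0 < δ ∧ δ < R ∧ ∀ x y : Pt n, (‖x - y‖ ≤ δ ∨ R ≤ ‖x - y‖) → K x y = 0

/-- `T_σ f(x) = ∫ K(x,y) f(y) dσ(y)`. -/
def CZOp {n : ℕ} (K : Pt n → Pt n → ℝ) (σ : Measure (Pt n)) (f : Pt n → ℝ)
    (x : Pt n) : ℝ :=
  ∫ y, K x y * f y ∂σ

/-- The dual Sobolev norm `‖g‖_{W^{-s}(μ)}`, realized as the norm of the linear functional
`f ↦ ⟨f,g⟩_{L²(μ)}` on the unit ball of `W^s(μ)`. -/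
def dualSobNorm {n : ℕ} (μ : Measure (Pt n)) (s : ℝ) (g : Pt n → ℝ) : ℝ≥0∞ :=
  ⨆ f : {f : Pt n → ℝ // Measurable f ∧ MemLp f 2 μ ∧ contSobolevNormSq μ s f ≤ 1},
    ENNReal.ofReal |∫ x, f.1 x * g x ∂μ|

/-- The cube `J` is `(r,ε)`-bad in the grid `D`. -/
def IsBad {n : ℕ} (D : DyadicGrid n) (r : ℕ) (ε : ℝ) (J : Cube n) : Prop :=
  ∃ I : Cube n, D.mem I ∧ (2 : ℝ) ^ r * J.side ≤ I.side ∧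
    ∃ p q : Pt n, (∃ I' ∈ D.children I, p ∈ frontier I'.toSet) ∧ q ∈ J.toSet ∧
      dist p q ≤ (1 / 2) * J.side ^ ε * I.side ^ (1 - ε)

/-- `f` is `(r,ε)`-good: its Alpert expansion is supported on `(r,ε)`-good cubes. -/
def IsGoodFun {n : ℕ} {μ : Measure (Pt n)} {D : DyadicGrid n} {κ : ℕ}
    (A : AlpertSystem μ D κ) (r : ℕ) (ε : ℝ) (f : Pt n → ℝ) : Prop :=
  ∀ Q, D.mem Q → IsBad D r ε Q → ∀ᵐ x ∂μ, A.proj Q f x = 0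

/-- The `ε`-strong `μ`-Carleson condition for a subgrid `𝓕` with constant `C`. -/
def StrongCarleson {n : ℕ} (μ : Measure (Pt n)) (𝓕 : Set (Cube n)) (ε C : ℝ) : Prop :=
  ∀ F' ∈ 𝓕,
    ∑' F : {F : Cube n // F ∈ 𝓕 ∧ F.toSet ⊆ F'.toSet},
        ENNReal.ofReal ((F'.side / F.1.side) ^ ε) * μ F.1.toSet ≤
      ENNReal.ofReal C * μ F'.toSet

/-- `V` is an upper bound for the square `(V_{2,ε}^{α,κ}(σ,ω))²` of the `ε`-strong
`κ`-pivotal constant: for every cube `Q` and every subdecomposition of `Q` into pairwise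
disjoint dyadic subcubes the corresponding pivotal sum is at most `V |Q|_σ`. -/
def IsPivotalBound {n : ℕ} (ε : ℝ) (κ : ℕ) (α : ℝ) (σ ω : Measure (Pt n))
    (V : ℝ≥0∞) : Prop :=
  ∀ Q : Cube n, 0 < Q.side → ∀ (Qr : ℕ → Cube n) (S : Set ℕ),
    (∀ r ∈ S, (Qr r).toSet ⊆ Q.toSet ∧ ∃ k : ℕ, (Qr r).side = Q.side / 2 ^ k) →
    (∀ r ∈ S, ∀ r' ∈ S, r ≠ r' →
      Disjoint (interior (Qr r).toSet) (interior (Qr r').toSet)) →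
    ∑' r : S, poisson (κ : ℝ) α (Qr r.1) (σ.restrict Q.toSet) ^ 2 *
        ENNReal.ofReal ((Q.side / (Qr r.1).side) ^ ε) * ω (Qr r.1).toSet ≤
      V * σ Q.toSet

/-- The Calderón–Zygmund corona `C_F` determined by the stopping cubes `𝓕`. -/
def corona {n : ℕ} (D : DyadicGrid n) (𝓕 : Set (Cube n)) (F : Cube n) : Set (Cube n) :=
  {I | D.mem I ∧ I.toSet ⊆ F.toSet ∧ ∀ F' ∈ 𝓕, F'.toSet ⊂ F.toSet → ¬ I.toSet ⊆ F'.toSet}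

/-- The `𝓕`-children of a stopping cube `F`: maximal members of `𝓕` strictly inside `F`. -/
def stoppingChildren {n : ℕ} (𝓕 : Set (Cube n)) (F : Cube n) : Set (Cube n) :=
  {F' | F' ∈ 𝓕 ∧ F'.toSet ⊂ F.toSet ∧
    ∀ F'' ∈ 𝓕, F''.toSet ⊂ F.toSet → F'.toSet ⊆ F''.toSet → F'' = F'}

/-- `N_D^τ(F)`: the cubes of `D` inside `F` within `τ` levels of the top. -/
def nbhd {n : ℕ} (D : DyadicGrid n) (τ : ℕ) (F : Cube n) : Set (Cube n) :=
  {J | D.mem J ∧ J.toSet ⊆ F.toSet ∧ F.side < 2 ^ τ * J.side}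

/-- The `τ`-shifted corona `C_F^{τ-shift}`. -/
def shiftedCorona {n : ℕ} (D : DyadicGrid n) (𝓕 : Set (Cube n)) (τ : ℕ) (F : Cube n) :
    Set (Cube n) :=
  (corona D 𝓕 F \ nbhd D τ F) ∪ ⋃ F' ∈ stoppingChildren 𝓕 F, (nbhd D τ F' \ nbhd D τ F)

/-- The shifted corona projection `P^ω_{C_F^{τ-shift}} g`. -/
def shiftProj {n : ℕ} {μ : Measure (Pt n)} {D : DyadicGrid n} {κ : ℕ}
    (A : AlpertSystem μ D κ) (𝓕 : Set (Cube n)) (τ : ℕ) (F : Cube n) (g : Pt n → ℝ)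
    (x : Pt n) : ℝ :=
  ∑' J : shiftedCorona D 𝓕 τ F, A.proj J.1 g x

/-- The squared `W^s_D(μ)` norm of the bad part `P_{bad;D}^μ f`. -/
def badNormSq {n : ℕ} {μ : Measure (Pt n)} {D : DyadicGrid n} {κ : ℕ}
    (A : AlpertSystem μ D κ) (r : ℕ) (ε s : ℝ) (f : Pt n → ℝ) : ℝ≥0∞ :=
  ∑' Q : {Q : Cube n // D.mem Q ∧ IsBad D r ε Q},
    ENNReal.ofReal (Q.1.side ^ (-(2 * s))) *
      ∫⁻ x, ENNReal.ofReal (A.proj Q.1 f x ^ 2) ∂μ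

/-- The bad projection `P_{bad;D}^μ f = Σ_{Q bad} △_Q^μ f`. -/
def badProj {n : ℕ} {μ : Measure (Pt n)} {D : DyadicGrid n} {κ : ℕ}
    (A : AlpertSystem μ D κ) (r : ℕ) (ε : ℝ) (f : Pt n → ℝ) (x : Pt n) : ℝ :=
  ∑' Q : {Q : Cube n // D.mem Q ∧ IsBad D r ε Q}, A.proj Q.1 f x

/-- The far-below form `T_farbelow(f,g)`. -/
def farBelowForm {n : ℕ} {σ ω : Measure (Pt n)} {D : DyadicGrid n} {κ₁ κ₂ : ℕ}
    (𝓕 : Set (Cube n)) (τ : ℕ) (K : Pt n → Pt n → ℝ)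
    (Aσ : AlpertSystem σ D κ₁) (Aω : AlpertSystem ω D κ₂) (f g : Pt n → ℝ) : ℝ :=
  ∑' F : 𝓕, ∑' I : {I : Cube n // D.mem I ∧ F.1.toSet ⊂ I.toSet},
    ∫ x, CZOp K σ (Aσ.proj I.1 f) x * shiftProj Aω 𝓕 τ F.1 g x ∂ω

/-- The homogeneous convolution kernel `K^α(x,y) = Ω(x-y)/|x-y|^{n-α}`. -/
def homogKernel (n : ℕ) (α : ℝ) (Om : Pt n → ℝ) : Pt n → Pt n → ℝ :=
  fun x y => Om (x - y) / ‖x - y‖ ^ ((n : ℝ) - α)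

/-- `K` is an admissible truncation of the kernel `Kfull`. -/
def IsAdmissibleTruncationOf (n : ℕ) (α : ℝ) (Kfull K : Pt n → Pt n → ℝ) : Prop :=
  (∃ CK : ℕ → ℝ, IsTruncatedCZKernel n α CK K) ∧
    ∃ η : ℝ → ℝ, (∀ t, 0 ≤ η t ∧ η t ≤ 1) ∧ ∀ x y : Pt n, K x y = η ‖x - y‖ * Kfull x y

namespace Halo
variable {n D : ℕ}

abbrev Idx (n D : ℕ) := Fin n → Fin (D+1)

def mono (β : Idx n D) (x : Pt n) : ℝ := ∏ i, x i ^ (β i : ℕ)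

def L (c : Idx n D → ℝ) (x : Pt n) : ℝ := ∑ β, c β * mono β x

def PC (n D : ℕ) : Set (Pt n → ℝ) := {f | ∃ c : Idx n D → ℝ, f = L c}

lemma abs_coord_le_dist (x y : Pt n) (i : Fin n) : |x i - y i| ≤ dist x y := by
  rw [EuclideanSpace.dist_eq]
  calc |x i - y i| = Real.sqrt (dist (x i) (y i) ^ 2) := by
        rw [Real.dist_eq, Real.sqrt_sq_eq_abs, abs_abs]
    _ ≤ Real.sqrt (∑ j, dist (x j) (y j) ^ 2) := Real.sqrt_le_sqrt
        (Finset.single_le_sum (f := fun j => dist (x j) (y j) ^ 2)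
          (fun j _ => sq_nonneg _) (Finset.mem_univ i))

lemma dist_le_of_coords {x y : Pt n} {b : ℝ} (hb : 0 ≤ b)
    (h : ∀ i, |x i - y i| ≤ b) : dist x y ≤ (n + 1) * b := by
  rw [EuclideanSpace.dist_eq]
  have h2 : ∑ i, dist (x i) (y i) ^ 2 ≤ ((n+1) * b) ^ 2 := by
    calc ∑ i, dist (x i) (y i) ^ 2 ≤ ∑ _i : Fin n, b ^ 2 := by
          apply Finset.sum_le_sum
          intro i _
          have := h i
          rw [Real.dist_eq]
          nlinarith [abs_nonneg (x i - y i), this]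
      _ = n * b ^ 2 := by simp [mul_comm]
      _ ≤ ((n+1) * b) ^ 2 := by nlinarith [sq_nonneg b, Nat.cast_nonneg (α := ℝ) n]
  calc Real.sqrt (∑ i, dist (x i) (y i) ^ 2) ≤ Real.sqrt (((n+1) * b) ^ 2) :=
        Real.sqrt_le_sqrt h2
    _ = (n+1) * b := Real.sqrt_sq (by positivity)

lemma prod_sub_prod_abs_le {ι : Type*} (s : Finset ι) (f g : ι → ℝ) {M : ℝ} (hM : 1 ≤ M)
    (hf : ∀ i ∈ s, |f i| ≤ M) (hg : ∀ i ∈ s, |g i| ≤ M) :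
    |∏ i ∈ s, f i - ∏ i ∈ s, g i| ≤ M ^ s.card * ∑ i ∈ s, |f i - g i| := by
  classical
  induction s using Finset.induction_on with
  | empty => simp
  | @insert a s ha ih =>
    rw [Finset.prod_insert ha, Finset.prod_insert ha, Finset.sum_insert ha,
      Finset.card_insert_of_notMem ha]
    have hfa := hf a (Finset.mem_insert_self a s)
    have hga := hg a (Finset.mem_insert_self a s)
    have hf' : ∀ i ∈ s, |f i| ≤ M := fun i hi => hf i (Finset.mem_insert_of_mem hi)
    have hg' : ∀ i ∈ s, |g i| ≤ M := fun i hi => hg i (Finset.mem_insert_of_mem hi)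
    have ih' := ih hf' hg'
    have hprodf : |∏ i ∈ s, f i| ≤ M ^ s.card := by
      calc |∏ i ∈ s, f i| = ∏ i ∈ s, |f i| := by rw [Finset.abs_prod]
        _ ≤ ∏ _i ∈ s, M := Finset.prod_le_prod (fun i _ => abs_nonneg _) hf'
        _ = M ^ s.card := by rw [Finset.prod_const]
    have key : f a * ∏ i ∈ s, f i - g a * ∏ i ∈ s, g i
        = (f a - g a) * ∏ i ∈ s, f i + g a * (∏ i ∈ s, f i - ∏ i ∈ s, g i) := by ring
    rw [key]
    have hM0 : 0 ≤ M := le_trans zero_le_one hM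
    calc |(f a - g a) * ∏ i ∈ s, f i + g a * (∏ i ∈ s, f i - ∏ i ∈ s, g i)|
        ≤ |(f a - g a) * ∏ i ∈ s, f i| + |g a * (∏ i ∈ s, f i - ∏ i ∈ s, g i)| := abs_add_le _ _
      _ = |f a - g a| * |∏ i ∈ s, f i| + |g a| * |∏ i ∈ s, f i - ∏ i ∈ s, g i| := by
          rw [abs_mul, abs_mul]
      _ ≤ |f a - g a| * M ^ s.card + M * (M ^ s.card * ∑ i ∈ s, |f i - g i|) := by
          gcongr
      _ ≤ M ^ (s.card + 1) * (|f a - g a| + ∑ i ∈ s, |f i - g i|) := by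
          have hpow : M ^ s.card ≤ M ^ (s.card+1) := by
            apply pow_le_pow_right₀ hM; omega
          have habs : 0 ≤ |f a - g a| := abs_nonneg _
          have e1 : |f a - g a| * M ^ s.card ≤ |f a - g a| * M ^ (s.card+1) :=
            mul_le_mul_of_nonneg_left hpow habs
          have e2 : M * (M ^ s.card * ∑ i ∈ s, |f i - g i|)
              = M ^ (s.card+1) * ∑ i ∈ s, |f i - g i| := by ring
          rw [mul_add]
          linarith

lemma pow_sub_pow_abs_le {a b M : ℝ} (hM : 1 ≤ M) (ha : |a| ≤ M) (hb : |b| ≤ M) (k : ℕ) :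
    |a ^ k - b ^ k| ≤ M ^ k * (k * |a - b|) := by
  have := prod_sub_prod_abs_le (Finset.range k) (fun _ => a) (fun _ => b) hM
    (fun i _ => ha) (fun i _ => hb)
  simpa [Finset.prod_const, Finset.sum_const, Finset.card_range, mul_comm] using this


lemma fin_le_D (β : Idx n D) (i : Fin n) : (β i : ℕ) ≤ D := Nat.lt_succ_iff.mp (β i).isLt

lemma mono_abs_le {β : Idx n D} {x : Pt n} {T : ℝ} (hT : 1 ≤ T)
    (hx : ∀ i, |x i| ≤ T) : |mono β x| ≤ T ^ (D * n) := by
  have hT0 : 0 ≤ T := le_trans zero_le_one hT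
  calc |mono β x| = ∏ i, |x i| ^ (β i : ℕ) := by
        rw [mono, Finset.abs_prod]; simp [abs_pow]
    _ ≤ ∏ _i : Fin n, T ^ D := by
        apply Finset.prod_le_prod (fun i _ => by positivity)
        intro i _
        calc |x i| ^ (β i : ℕ) ≤ T ^ (β i : ℕ) :=
              pow_le_pow_left₀ (abs_nonneg _) (hx i) _
          _ ≤ T ^ D := pow_le_pow_right₀ hT (fin_le_D β i)
    _ = T ^ (D * n) := by rw [Finset.prod_const, Finset.card_univ, Fintype.card_fin, ← pow_mul]

lemma mono_lip {β : Idx n D} {x y : Pt n} {T : ℝ} (hT : 1 ≤ T)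
    (hx : ∀ i, |x i| ≤ T) (hy : ∀ i, |y i| ≤ T) :
    |mono β x - mono β y| ≤ (n * D : ℕ) * T ^ (D * n + D) * dist x y := by
  have hT0 : 0 ≤ T := le_trans zero_le_one hT
  have hTD : (1:ℝ) ≤ T ^ D := one_le_pow₀ hT
  have h1 : |mono β x - mono β y| ≤
      (T ^ D) ^ (Finset.univ : Finset (Fin n)).card *
        ∑ i, |x i ^ (β i : ℕ) - y i ^ (β i : ℕ)| := by
    apply prod_sub_prod_abs_le Finset.univ (fun i => x i ^ (β i : ℕ))
      (fun i => y i ^ (β i : ℕ)) hTD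
    · intro i _
      rw [abs_pow]
      calc |x i| ^ (β i : ℕ) ≤ T ^ (β i : ℕ) := pow_le_pow_left₀ (abs_nonneg _) (hx i) _
        _ ≤ T ^ D := pow_le_pow_right₀ hT (fin_le_D β i)
    · intro i _
      rw [abs_pow]
      calc |y i| ^ (β i : ℕ) ≤ T ^ (β i : ℕ) := pow_le_pow_left₀ (abs_nonneg _) (hy i) _
        _ ≤ T ^ D := pow_le_pow_right₀ hT (fin_le_D β i)
  have h2 : ∑ i, |x i ^ (β i : ℕ) - y i ^ (β i : ℕ)| ≤
      (n : ℝ) * (T ^ D * (D * dist x y)) := by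
    calc ∑ i, |x i ^ (β i : ℕ) - y i ^ (β i : ℕ)|
        ≤ ∑ _i : Fin n, T ^ D * (D * dist x y) := by
          apply Finset.sum_le_sum
          intro i _
          calc |x i ^ (β i : ℕ) - y i ^ (β i : ℕ)|
              ≤ T ^ (β i : ℕ) * ((β i : ℕ) * |x i - y i|) :=
                pow_sub_pow_abs_le hT (hx i) (hy i) _
            _ ≤ T ^ D * (D * dist x y) := by
                apply mul_le_mul
                · exact pow_le_pow_right₀ hT (fin_le_D β i)
                · apply mul_le_mul (by exact Nat.cast_le.mpr (fin_le_D β i))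
                    (abs_coord_le_dist x y i) (abs_nonneg _) (Nat.cast_nonneg _)
                · positivity
                · positivity
      _ = (n : ℝ) * (T ^ D * (D * dist x y)) := by
          rw [Finset.sum_const, Finset.card_univ, Fintype.card_fin, nsmul_eq_mul]
  calc |mono β x - mono β y| ≤
      (T ^ D) ^ n * ((n : ℝ) * (T ^ D * (D * dist x y))) := by
        rw [Finset.card_univ, Fintype.card_fin] at h1
        refine le_trans h1 ?_
        apply mul_le_mul_of_nonneg_left h2 (by positivity)
    _ = (n * D : ℕ) * T ^ (D * n + D) * dist x y := by
        rw [← pow_mul]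
        push_cast
        ring

lemma L_abs_le {c : Idx n D → ℝ} {x : Pt n} {T : ℝ} (hT : 1 ≤ T)
    (hx : ∀ i, |x i| ≤ T) :
    |L c x| ≤ (Fintype.card (Idx n D) : ℝ) * ‖c‖ * T ^ (D * n) := by
  calc |L c x| ≤ ∑ β, |c β * mono β x| := Finset.abs_sum_le_sum_abs _ _
    _ ≤ ∑ _β : Idx n D, ‖c‖ * T ^ (D * n) := by
        apply Finset.sum_le_sum
        intro β _
        rw [abs_mul]
        apply mul_le_mul (norm_le_pi_norm c β) (mono_abs_le hT hx) (abs_nonneg _)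
          (norm_nonneg _)
    _ = (Fintype.card (Idx n D) : ℝ) * (‖c‖ * T ^ (D * n)) := by
        rw [Finset.sum_const, Finset.card_univ, nsmul_eq_mul]
    _ = (Fintype.card (Idx n D) : ℝ) * ‖c‖ * T ^ (D * n) := by ring

lemma L_lip {c : Idx n D → ℝ} {x y : Pt n} {T : ℝ} (hT : 1 ≤ T)
    (hx : ∀ i, |x i| ≤ T) (hy : ∀ i, |y i| ≤ T) :
    |L c x - L c y| ≤ (Fintype.card (Idx n D) : ℝ) * ‖c‖ *
      ((n * D : ℕ) * T ^ (D * n + D)) * dist x y := by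
  have h0 : L c x - L c y = ∑ β, c β * (mono β x - mono β y) := by
    rw [L, L, ← Finset.sum_sub_distrib]
    congr 1; funext β; ring
  rw [h0]
  calc |∑ β, c β * (mono β x - mono β y)| ≤ ∑ β, |c β * (mono β x - mono β y)| :=
        Finset.abs_sum_le_sum_abs _ _
    _ ≤ ∑ _β : Idx n D, ‖c‖ * ((n * D : ℕ) * T ^ (D * n + D) * dist x y) := by
        apply Finset.sum_le_sum
        intro β _
        rw [abs_mul]
        exact mul_le_mul (norm_le_pi_norm c β) (mono_lip hT hx hy) (abs_nonneg _)
          (norm_nonneg _)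
    _ = (Fintype.card (Idx n D) : ℝ) * (‖c‖ * ((n * D : ℕ) * T ^ (D * n + D) * dist x y)) := by
        rw [Finset.sum_const, Finset.card_univ, nsmul_eq_mul]
    _ = (Fintype.card (Idx n D) : ℝ) * ‖c‖ * ((n * D : ℕ) * T ^ (D * n + D)) * dist x y := by
        ring

lemma L_continuous (c : Idx n D → ℝ) : Continuous (L c) := by
  apply continuous_finset_sum
  intro β _
  apply Continuous.mul continuous_const
  apply continuous_finset_prod
  intro i _
  exact ((EuclideanSpace.proj (𝕜 := ℝ) i).continuous).pow _

lemma L_analytic (c : Idx n D → ℝ) : AnalyticOnNhd ℝ (L c) Set.univ := by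
  rw [show L c = ∑ β, fun x => c β * mono β x from by funext x; simp [L, Finset.sum_apply]]
  apply Finset.analyticOnNhd_sum
  intro β _
  apply AnalyticOnNhd.mul analyticOnNhd_const
  rw [show mono β = ∏ i, fun x : Pt n => x i ^ (β i : ℕ) from by funext x; simp [mono, Finset.prod_apply]]
  apply Finset.analyticOnNhd_prod
  intro i _
  have h := ((EuclideanSpace.proj (𝕜 := ℝ) i).analyticOnNhd Set.univ).pow (β i : ℕ)
  have he : (fun x : Pt n => (EuclideanSpace.proj (𝕜 := ℝ) i) x ^ (β i : ℕ))
      = fun x : Pt n => x i ^ (β i : ℕ) := rfl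
  exact h

def fs (β : Idx n D) : Fin n →₀ ℕ := Finsupp.equivFunOnFinite.symm (fun i => (β i : ℕ))

lemma fs_apply (β : Idx n D) (i : Fin n) : fs β i = (β i : ℕ) := rfl

lemma fs_injective : Function.Injective (fs (n := n) (D := D)) := by
  intro β β' h
  funext i
  have := congrArg (fun f => f i) h
  simp only [fs_apply] at this
  exact Fin.ext this

lemma L_eq_zero_forall {c : Idx n D → ℝ} (h : ∀ x : Pt n, L c x = 0) : c = 0 := by
  classical
  set Pc : MvPolynomial (Fin n) ℝ := ∑ β, MvPolynomial.monomial (fs β) (c β) with hPc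
  have heval : ∀ x : Fin n → ℝ, MvPolynomial.eval x Pc = L c (WithLp.toLp 2 x) := by
    intro x
    rw [hPc, map_sum, L]
    apply Finset.sum_congr rfl
    intro β _
    rw [MvPolynomial.eval_monomial]
    congr 1
    rw [Finsupp.prod_fintype _ _ (fun i => pow_zero _)]
    rfl
  have hzero : Pc = 0 := by
    apply MvPolynomial.funext
    intro x
    rw [heval x, h (WithLp.toLp 2 x), map_zero]
  funext β
  have hc : MvPolynomial.coeff (fs β) Pc = c β := by
    rw [hPc, MvPolynomial.coeff_sum]
    rw [Finset.sum_eq_single β]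
    · rw [MvPolynomial.coeff_monomial, if_pos rfl]
    · intro β' _ hne
      rw [MvPolynomial.coeff_monomial, if_neg (fun he => hne (fs_injective he))]
    · intro hmem
      exact absurd (Finset.mem_univ β) hmem
  rw [hzero, MvPolynomial.coeff_zero] at hc
  simp [← hc]

lemma L_vanish_cube {c : Idx n D → ℝ} {a : Pt n} {s : ℝ} (hs : 0 < s)
    (h : ∀ x : Pt n, (∀ i, |x i - a i| ≤ s / 2) → L c x = 0) : c = 0 := by
  apply L_eq_zero_forall
  have hball : ∀ x ∈ Metric.ball a (s/2), L c x = 0 := by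
    intro x hx
    apply h
    intro i
    have h1 := abs_coord_le_dist x a i
    have h2 : dist x a < s/2 := Metric.mem_ball.mp hx
    linarith
  have hev : L c =ᶠ[nhds a] 0 := by
    apply Filter.eventuallyEq_of_mem (Metric.ball_mem_nhds a (show (0:ℝ) < s/2 by positivity))
    intro x hx
    exact hball x hx
  have := (L_analytic c).eqOn_zero_of_preconnected_of_eventuallyEq_zero
    isPreconnected_univ (Set.mem_univ a) hev
  intro x
  exact this (Set.mem_univ x)

lemma L_smul (r : ℝ) (c : Idx n D → ℝ) (x : Pt n) : L (r • c) x = r * L c x := by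
  rw [L, L, Finset.mul_sum]
  apply Finset.sum_congr rfl
  intro β _
  simp [Pi.smul_apply, smul_eq_mul]
  ring

/-- The basic compactness bound: coefficients are controlled by the sup on any cube. -/
lemma coeff_bound (a : Pt n) {s : ℝ} (hs : 0 < s) :
    ∃ CK : ℝ, 1 ≤ CK ∧ ∀ (c : Idx n D → ℝ) (M : ℝ), 0 ≤ M →
      (∀ x : Pt n, (∀ i, |x i - a i| ≤ s / 2) → |L c x| ≤ M) → ‖c‖ ≤ CK * M := by
  classical
  -- first the normalized version
  have core : ∃ CK : ℝ, 1 ≤ CK ∧ ∀ c : Idx n D → ℝ,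
      (∀ x : Pt n, (∀ i, |x i - a i| ≤ s / 2) → |L c x| ≤ 1) → ‖c‖ ≤ CK := by
    by_contra hcon
    push_neg at hcon
    have hex : ∀ k : ℕ, ∃ c : Idx n D → ℝ,
        (∀ x : Pt n, (∀ i, |x i - a i| ≤ s / 2) → |L c x| ≤ 1) ∧ ((k:ℝ)+1) < ‖c‖ := by
      intro k
      obtain ⟨c, hc1, hc2⟩ := hcon ((k:ℝ)+1) (by
        have : (0:ℝ) ≤ k := Nat.cast_nonneg _
        linarith)
      exact ⟨c, hc1, hc2⟩
    set A : ℕ → Set (Idx n D → ℝ) := fun k =>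
      {u | ‖u‖ = 1} ∩ ⋂ (x : Pt n) (_ : ∀ i, |x i - a i| ≤ s / 2),
        {u | |L u x| ≤ 1/((k:ℝ)+1)} with hA
    have hAclosed : ∀ k, IsClosed (A k) := by
      intro k
      apply IsClosed.inter
      · exact isClosed_eq continuous_norm continuous_const
      · apply isClosed_iInter
        intro x
        apply isClosed_iInter
        intro _
        apply isClosed_le _ continuous_const
        apply Continuous.abs
        apply continuous_finset_sum
        intro β _
        exact (continuous_apply β).mul continuous_const
    have hAcompact : ∀ k, IsCompact (A k) := by
      intro k
      apply IsCompact.of_isClosed_subset (isCompact_sphere (0 : Idx n D → ℝ) 1)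
        (hAclosed k)
      intro u hu
      simpa [Metric.mem_sphere, dist_zero_right] using hu.1
    have hAnonempty : ∀ k, (A k).Nonempty := by
      intro k
      obtain ⟨c, hc1, hc2⟩ := hex k
      have hcnorm : (0:ℝ) < ‖c‖ := by
        have : (0:ℝ) ≤ k := Nat.cast_nonneg _
        linarith
      refine ⟨‖c‖⁻¹ • c, ?_, ?_⟩
      · simp only [Set.mem_setOf_eq, norm_smul, norm_inv, norm_norm]
        field_simp
      · simp only [Set.mem_iInter]
        intro x hx
        simp only [Set.mem_setOf_eq, L_smul, abs_mul, abs_inv, abs_norm]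
        rw [div_eq_mul_one_div 1, one_mul]
        calc ‖c‖⁻¹ * |L c x| ≤ ‖c‖⁻¹ * 1 := by
              apply mul_le_mul_of_nonneg_left (hc1 x hx) (by positivity)
          _ ≤ 1/((k:ℝ)+1) := by
              rw [mul_one, one_div]
              apply inv_anti₀ (by positivity) (le_of_lt hc2)
    have hdir : Directed (fun x1 x2 => x1 ⊇ x2) A := by
      intro j k
      refine ⟨max j k, ?_, ?_⟩
      · intro u hu
        obtain ⟨h1, h2⟩ := hu
        simp only [Set.mem_iInter, Set.mem_setOf_eq] at h2
        refine ⟨h1, ?_⟩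
        simp only [Set.mem_iInter, Set.mem_setOf_eq]
        intro x hx
        refine le_trans (h2 x hx) ?_
        apply one_div_le_one_div_of_le (by positivity)
        have : (j:ℝ) ≤ (max j k : ℕ) := by exact_mod_cast Nat.le_max_left j k
        linarith
      · intro u hu
        obtain ⟨h1, h2⟩ := hu
        simp only [Set.mem_iInter, Set.mem_setOf_eq] at h2
        refine ⟨h1, ?_⟩
        simp only [Set.mem_iInter, Set.mem_setOf_eq]
        intro x hx
        refine le_trans (h2 x hx) ?_
        apply one_div_le_one_div_of_le (by positivity)
        have : (k:ℝ) ≤ (max j k : ℕ) := by exact_mod_cast Nat.le_max_right j k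
        linarith
    obtain ⟨u, hu⟩ := IsCompact.nonempty_iInter_of_directed_nonempty_isCompact_isClosed
      A hdir hAnonempty hAcompact hAclosed
    simp only [Set.mem_iInter] at hu
    have hu1 : ‖u‖ = 1 := (hu 0).1
    have hu2 : ∀ x : Pt n, (∀ i, |x i - a i| ≤ s / 2) → L u x = 0 := by
      intro x hx
      have hle : ∀ k : ℕ, |L u x| ≤ 1/((k:ℝ)+1) := by
        intro k
        have h2 := (hu k).2
        simp only [Set.mem_iInter, Set.mem_setOf_eq] at h2
        exact h2 x hx
      have htend : Filter.Tendsto (fun k : ℕ => 1/((k:ℝ)+1)) Filter.atTop (nhds 0) :=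
        tendsto_one_div_add_atTop_nhds_zero_nat
      have : |L u x| ≤ 0 := ge_of_tendsto htend (Filter.Eventually.of_forall hle)
      exact abs_eq_zero.mp (le_antisymm this (abs_nonneg _))
    have := L_vanish_cube hs hu2
    rw [this] at hu1
    simp at hu1
  obtain ⟨CK, hCK1, hCK⟩ := core
  refine ⟨CK, hCK1, ?_⟩
  intro c M hM hbound
  rcases eq_or_lt_of_le hM with hM0 | hM0
  · -- M = 0
    have : ∀ x : Pt n, (∀ i, |x i - a i| ≤ s / 2) → L c x = 0 := by
      intro x hx
      have := hbound x hx
      rw [← hM0] at this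
      exact abs_eq_zero.mp (le_antisymm this (abs_nonneg _))
    rw [L_vanish_cube hs this]
    simp [← hM0]
  · have := hCK (M⁻¹ • c) (by
      intro x hx
      rw [L_smul, abs_mul, abs_inv, abs_of_pos hM0]
      rw [inv_mul_le_iff₀ hM0, mul_one]
      exact hbound x hx)
    rw [norm_smul, norm_inv, Real.norm_eq_abs, abs_of_pos hM0] at this
    rw [inv_mul_le_iff₀ hM0] at this
    linarith [this]


def aff (a : Pt n) (s : ℝ) (x : Pt n) : Pt n := WithLp.toLp 2 (fun i => a i + s * x i)

lemma aff_apply (a : Pt n) (s : ℝ) (x : Pt n) (i : Fin n) :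
    aff a s x i = a i + s * x i := rfl

lemma PC_zero : (fun _ : Pt n => (0:ℝ)) ∈ PC n D := by
  refine ⟨0, ?_⟩
  funext x
  simp [L]

lemma PC_smul {f : Pt n → ℝ} (hf : f ∈ PC n D) (r : ℝ) :
    (fun x => r * f x) ∈ PC n D := by
  obtain ⟨c, rfl⟩ := hf
  exact ⟨r • c, funext fun x => (L_smul r c x).symm⟩

lemma PC_add {f g : Pt n → ℝ} (hf : f ∈ PC n D) (hg : g ∈ PC n D) :
    (fun x => f x + g x) ∈ PC n D := by
  obtain ⟨c, rfl⟩ := hf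
  obtain ⟨c', rfl⟩ := hg
  refine ⟨c + c', funext fun x => ?_⟩
  rw [L, L, L, ← Finset.sum_add_distrib]
  apply Finset.sum_congr rfl
  intro β _
  simp [add_mul]

lemma PC_sum {ι : Type*} (t : Finset ι) (f : ι → Pt n → ℝ)
    (h : ∀ j ∈ t, f j ∈ PC n D) : (fun x => ∑ j ∈ t, f j x) ∈ PC n D := by
  classical
  induction t using Finset.induction_on with
  | empty => simpa using PC_zero
  | @insert a t ha ih =>
    have h1 : f a ∈ PC n D := h a (Finset.mem_insert_self a t)
    have h2 : (fun x => ∑ j ∈ t, f j x) ∈ PC n D :=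
      ih (fun j hj => h j (Finset.mem_insert_of_mem hj))
    have := PC_add h1 h2
    convert this using 1
    funext x
    rw [Finset.sum_insert ha]

lemma mono_mem (β : Idx n D) : mono β ∈ PC n D := by
  classical
  refine ⟨Pi.single β 1, funext fun x => ?_⟩
  rw [L, Finset.sum_eq_single β]
  · simp
  · intro β' _ hne
    simp [Pi.single_apply, hne]
  · intro hmem
    exact absurd (Finset.mem_univ β) hmem

lemma mono_subst (β : Idx n D) (a : Pt n) (s : ℝ) :
    (fun x : Pt n => mono β (aff a s x)) ∈ PC n D := by
  classical
  have hexp : ∀ x : Pt n, mono β (aff a s x) =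
      ∑ K ∈ Fintype.piFinset (fun i => Finset.range ((β i : ℕ) + 1)),
        (∏ i, (a i ^ (K i) * s ^ ((β i : ℕ) - K i) * ((β i : ℕ).choose (K i) : ℝ))) *
          ∏ i, x i ^ ((β i : ℕ) - K i) := by
    intro x
    have h1 : ∀ i : Fin n, (aff a s x) i ^ (β i : ℕ)
        = ∑ k ∈ Finset.range ((β i : ℕ)+1),
            a i ^ k * s ^ ((β i :ℕ) - k) * ((β i : ℕ).choose k : ℝ) * x i ^ ((β i :ℕ) - k) := by
      intro i
      rw [aff_apply, add_pow]
      apply Finset.sum_congr rfl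
      intro k hk
      rw [mul_pow]
      ring
    calc mono β (aff a s x) = ∏ i, ∑ k ∈ Finset.range ((β i : ℕ)+1),
          a i ^ k * s ^ ((β i :ℕ) - k) * ((β i : ℕ).choose k : ℝ) * x i ^ ((β i :ℕ) - k) := by
          rw [mono]
          exact Finset.prod_congr rfl fun i _ => h1 i
      _ = ∑ K ∈ Fintype.piFinset (fun i => Finset.range ((β i : ℕ) + 1)),
          ∏ i, (a i ^ (K i) * s ^ ((β i : ℕ) - K i) * ((β i : ℕ).choose (K i) : ℝ) *
            x i ^ ((β i : ℕ) - K i)) := Finset.prod_univ_sum _ _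
      _ = _ := by
          apply Finset.sum_congr rfl
          intro K _
          rw [← Finset.prod_mul_distrib]
  have heq : (fun x : Pt n => mono β (aff a s x)) =
      fun x => ∑ K ∈ Fintype.piFinset (fun i => Finset.range ((β i : ℕ) + 1)),
        (fun K' => fun y : Pt n =>
          (∏ i, (a i ^ (K' i) * s ^ ((β i : ℕ) - K' i) * ((β i : ℕ).choose (K' i) : ℝ))) *
            mono (fun i => (⟨(β i : ℕ) - K' i,
              lt_of_le_of_lt (Nat.sub_le _ _) (β i).isLt⟩ : Fin (D+1))) y) K x := by
    funext x
    rw [hexp x]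
    rfl
  rw [heq]
  apply PC_sum
  intro K _
  exact PC_smul (mono_mem _) _

lemma PC_subst {f : Pt n → ℝ} (hf : f ∈ PC n D) (a : Pt n) (s : ℝ) :
    (fun x : Pt n => f (aff a s x)) ∈ PC n D := by
  obtain ⟨c, rfl⟩ := hf
  have heq : (fun x : Pt n => L c (aff a s x)) =
      fun x => ∑ β, (fun β' => fun y : Pt n => c β' * mono β' (aff a s y)) β x := rfl
  rw [heq]
  apply PC_sum
  intro β _
  exact PC_smul (mono_subst β a s) _


lemma aff_dist (a : Pt n) (s : ℝ) (x y : Pt n) :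
    dist (aff a s x) (aff a s y) = |s| * dist x y := by
  rw [EuclideanSpace.dist_eq, EuclideanSpace.dist_eq]
  have h1 : ∀ i : Fin n, dist (aff a s x i) (aff a s y i) ^ 2
      = s ^ 2 * dist (x i) (y i) ^ 2 := by
    intro i
    rw [aff_apply, aff_apply, Real.dist_eq, Real.dist_eq]
    rw [← abs_pow, ← abs_pow]
    have : (a i + s * x i - (a i + s * y i)) ^ 2 = s ^ 2 * (x i - y i) ^ 2 := by ring
    rw [this, abs_mul, abs_pow, ← abs_pow, abs_of_nonneg (sq_nonneg (x i - y i)),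
      abs_of_nonneg (sq_nonneg s)]
  rw [Finset.sum_congr rfl (fun i _ => h1 i), ← Finset.mul_sum,
    Real.sqrt_mul (sq_nonneg s), Real.sqrt_sq_eq_abs]

/-- inverse affine map sending the cube (a,s) to the unit cube -/
def affInv (a : Pt n) (s : ℝ) : Pt n → Pt n := aff (WithLp.toLp 2 (fun i => -(a i) / s)) s⁻¹

lemma affInv_apply (a : Pt n) (s : ℝ) (x : Pt n) (i : Fin n) :
    affInv a s x i = (x i - a i) / s := by
  show -(a i) / s + s⁻¹ * x i = (x i - a i) / s
  field_simp
  ring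

lemma one_le_mul2 {a b : ℝ} (ha : 1 ≤ a) (hb : 1 ≤ b) : 1 ≤ a * b := by nlinarith

lemma aff_affInv {a : Pt n} {s : ℝ} (hs : s ≠ 0) (x : Pt n) :
    aff a s (affInv a s x) = x := by
  ext i
  rw [aff_apply, affInv_apply]
  field_simp
  ring

/-- Main transported estimates: Lipschitz & sup bounds on the tripled cube. -/
lemma exists_lip_const (n D : ℕ) : ∃ C₁ : ℝ, 1 ≤ C₁ ∧
    ∀ (a : Pt n) (s : ℝ), 0 < s → ∀ f ∈ PC n D,
      (∀ y : Pt n, (∀ i, |y i - a i| ≤ s/2) → |f y| ≤ 1) →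
      (∀ x : Pt n, (∀ i, |x i - a i| ≤ 3*s/2) → |f x| ≤ C₁) ∧
      (∀ x y : Pt n, (∀ i, |x i - a i| ≤ 3*s/2) → (∀ i, |y i - a i| ≤ 3*s/2) →
        |f x - f y| ≤ C₁ / s * dist x y) := by
  obtain ⟨CU, hCU1, hCU⟩ := coeff_bound (n := n) (D := D) 0 one_pos
  set NC : ℝ := (Fintype.card (Idx n D) : ℝ) with hNC
  have hNC1 : 1 ≤ NC := by
    rw [hNC]
    exact_mod_cast Fintype.card_pos
  refine ⟨NC * CU * ((n*D : ℕ) + 1) * 2 ^ (D*n+D), ?_, ?_⟩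
  · have h1 : (1:ℝ) ≤ ((n*D : ℕ) + 1 : ℝ) := by
      have := Nat.cast_nonneg (α := ℝ) (n*D); linarith
    have h2 : (1:ℝ) ≤ (2:ℝ) ^ (D*n+D) := one_le_pow₀ one_le_two
    exact one_le_mul2 (one_le_mul2 (one_le_mul2 hNC1 hCU1) h1) h2
  intro a s hs f hf hb
  obtain ⟨c, rfl⟩ := hf
  obtain ⟨c', hc'⟩ := PC_subst ⟨c, rfl⟩ a s
  have hrep : ∀ x : Pt n, L c x = L c' (affInv a s x) := by
    intro x
    have h1 := congrArg (fun g => g (affInv a s x)) hc'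
    simp only at h1
    rw [aff_affInv (ne_of_gt hs)] at h1
    exact h1
  have hbound' : ∀ x : Pt n, (∀ i, |x i - (0:Pt n) i| ≤ 1/2) → |L c' x| ≤ 1 := by
    intro x hx
    have h1 := congrArg (fun g => g x) hc'
    simp only at h1
    rw [← h1]
    apply hb
    intro i
    rw [aff_apply]
    have := hx i
    simp only [PiLp.zero_apply, sub_zero] at this
    calc |a i + s * x i - a i| = s * |x i| := by
          rw [show a i + s * x i - a i = s * x i by ring, abs_mul, abs_of_pos hs]
      _ ≤ s * (1/2) := by apply mul_le_mul_of_nonneg_left this (le_of_lt hs)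
      _ = s / 2 := by ring
  have hnorm : ‖c'‖ ≤ CU := by
    have := hCU c' 1 zero_le_one hbound'
    simpa using this
  have hcoord : ∀ x : Pt n, (∀ i, |x i - a i| ≤ 3*s/2) →
      ∀ i, |affInv a s x i| ≤ 2 := by
    intro x hx i
    rw [affInv_apply, abs_div, abs_of_pos hs, div_le_iff₀ hs]
    calc |x i - a i| ≤ 3*s/2 := hx i
      _ ≤ 2 * s := by linarith
  constructor
  · intro x hx
    rw [hrep x]
    calc |L c' (affInv a s x)| ≤ NC * ‖c'‖ * 2 ^ (D * n) :=
          L_abs_le one_le_two (hcoord x hx)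
      _ ≤ NC * CU * ((n*D : ℕ) + 1) * 2 ^ (D*n+D) := by
          have h2 : (2:ℝ) ^ (D*n) ≤ 2 ^ (D*n+D) := by
            apply pow_le_pow_right₀ one_le_two; omega
          have h3 : (1:ℝ) ≤ ((n*D : ℕ) + 1 : ℝ) := by
            have := Nat.cast_nonneg (α := ℝ) (n*D); linarith
          have h4 : (0:ℝ) ≤ NC := by linarith
          have h5 : (0:ℝ) ≤ ‖c'‖ := norm_nonneg _
          have h6 : NC * ‖c'‖ ≤ NC * CU := mul_le_mul_of_nonneg_left hnorm h4
          have h9 : (0:ℝ) ≤ NC * CU := by nlinarith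
          have step1 : NC * ‖c'‖ * 2 ^ (D*n) ≤ (NC * CU) * 2 ^ (D*n+D) :=
            mul_le_mul h6 h2 (by positivity) h9
          have h10 : (0:ℝ) ≤ NC * CU * 2 ^ (D*n+D) := by positivity
          nlinarith [mul_nonneg h10 (sub_nonneg.mpr h3)]
  · intro x y hx hy
    rw [hrep x, hrep y]
    have hdist : dist (affInv a s x) (affInv a s y) = dist x y / s := by
      rw [affInv, aff_dist, abs_inv, abs_of_pos hs]
      rw [inv_mul_eq_div]
    calc |L c' (affInv a s x) - L c' (affInv a s y)|
        ≤ NC * ‖c'‖ * ((n * D : ℕ) * 2 ^ (D * n + D)) * dist (affInv a s x) (affInv a s y) :=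
          L_lip one_le_two (hcoord x hx) (hcoord y hy)
      _ ≤ NC * CU * (((n*D : ℕ) + 1) * 2 ^ (D * n + D)) * (dist x y / s) := by
          rw [hdist]
          apply mul_le_mul_of_nonneg_right _ (by positivity)
          have h4 : (0:ℝ) ≤ NC := by linarith
          have h7 : (0:ℝ) < (2:ℝ)^(D*n+D) := by positivity
          have h6 : NC * ‖c'‖ ≤ NC * CU := mul_le_mul_of_nonneg_left hnorm h4
          have h8 : ((n*D:ℕ) : ℝ) ≤ ((n*D:ℕ) + 1 : ℝ) := by linarith
          have h9 : ((n*D:ℕ) : ℝ) * 2^(D*n+D) ≤ ((n*D:ℕ) + 1 : ℝ) * 2^(D*n+D) :=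
            mul_le_mul_of_nonneg_right h8 (le_of_lt h7)
          have h11 : (0:ℝ) ≤ ((n*D:ℕ) : ℝ) * 2^(D*n+D) := by positivity
          have h12 : (0:ℝ) ≤ NC * CU := by nlinarith
          exact mul_le_mul h6 h9 h11 h12
      _ = NC * CU * ((n*D : ℕ) + 1) * 2 ^ (D*n+D) / s * dist x y := by ring

/-- Transported child-cube comparability. -/
lemma exists_child_const (n D : ℕ) : ∃ c₂ : ℝ, 0 < c₂ ∧ c₂ ≤ 1 ∧
    ∀ (a : Pt n) (s : ℝ), 0 < s → ∀ f ∈ PC n D, ∀ M : ℝ, 0 ≤ M →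
      ∀ b : Fin n → Bool,
      (∀ x : Pt n, (∀ i, |x i - (a i + (if b i then s/4 else -(s/4)))| ≤ s/4) → |f x| ≤ M) →
      ∀ x : Pt n, (∀ i, |x i - a i| ≤ s/2) → |f x| ≤ M / c₂ := by
  classical
  set NC : ℝ := (Fintype.card (Idx n D) : ℝ) with hNC
  have hNC1 : 1 ≤ NC := by
    rw [hNC]
    exact_mod_cast Fintype.card_pos
  have hCb : ∀ b : Fin n → Bool, ∃ CK : ℝ, 1 ≤ CK ∧
      ∀ (c : Idx n D → ℝ) (M : ℝ), 0 ≤ M →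
        (∀ x : Pt n, (∀ i, |x i - (WithLp.toLp 2 (fun j => if b j then (1:ℝ)/4 else -(1/4)) : Pt n) i| ≤ (1/2) / 2) → |L c x| ≤ M) →
        ‖c‖ ≤ CK * M := by
    intro b
    exact coeff_bound _ (by norm_num)
  choose CK hCK1 hCK2 using hCb
  have hne : (Finset.univ : Finset (Fin n → Bool)).Nonempty := Finset.univ_nonempty
  set Cmax : ℝ := Finset.univ.sup' hne CK with hCmax
  have hCmax1 : 1 ≤ Cmax := le_trans (hCK1 (fun _ => false))
    (Finset.le_sup' CK (Finset.mem_univ _))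
  refine ⟨(NC * Cmax)⁻¹, by positivity, ?_, ?_⟩
  · rw [inv_le_one₀ (by positivity)]
    nlinarith
  intro a s hs f hf M hM b hball x hx
  obtain ⟨c, rfl⟩ := hf
  obtain ⟨c', hc'⟩ := PC_subst ⟨c, rfl⟩ a s
  have hrep : ∀ z : Pt n, L c (aff a s z) = L c' z := by
    intro z
    exact (congrArg (fun g => g z) hc')
  -- bound on child of unit cube
  have hbound' : ∀ z : Pt n,
      (∀ i, |z i - (WithLp.toLp 2 (fun j => if b j then (1:ℝ)/4 else -(1/4)) : Pt n) i| ≤ (1/2)/2) →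
      |L c' z| ≤ M := by
    intro z hz
    rw [← hrep z]
    apply hball
    intro i
    rw [aff_apply]
    have h1 := hz i
    have h2 : |z i - (if b i then (1:ℝ)/4 else -(1/4))| ≤ 1/4 := by
      exact le_trans h1 (by norm_num)
    have : a i + s * z i - (a i + (if b i then s/4 else -(s/4)))
        = s * (z i - (if b i then (1:ℝ)/4 else -(1/4))) := by
      by_cases hb : b i <;> simp [hb] <;> ring
    rw [this, abs_mul, abs_of_pos hs]
    calc s * |z i - (if b i then (1:ℝ)/4 else -(1/4))| ≤ s * (1/4) :=
          mul_le_mul_of_nonneg_left h2 (le_of_lt hs)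
      _ = s/4 := by ring
  have hnorm : ‖c'‖ ≤ Cmax * M := by
    calc ‖c'‖ ≤ CK b * M := hCK2 b c' M hM hbound'
      _ ≤ Cmax * M := by
        apply mul_le_mul_of_nonneg_right _ hM
        exact Finset.le_sup' CK (Finset.mem_univ b)
  -- conclude on unit cube
  have hz : ∀ i, |affInv a s x i| ≤ 1 := by
    intro i
    rw [affInv_apply, abs_div, abs_of_pos hs, div_le_iff₀ hs]
    calc |x i - a i| ≤ s/2 := hx i
      _ ≤ 1 * s := by linarith
  have hfin : |L c (x)| = |L c' (affInv a s x)| := by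
    rw [← hrep, aff_affInv (ne_of_gt hs)]
  rw [hfin]
  calc |L c' (affInv a s x)| ≤ NC * ‖c'‖ * 1 ^ (D * n) := L_abs_le le_rfl hz
    _ = NC * ‖c'‖ := by simp
    _ ≤ NC * (Cmax * M) := mul_le_mul_of_nonneg_left hnorm (by linarith)
    _ = M / (NC * Cmax)⁻¹ := by
        rw [div_eq_mul_inv, inv_inv]
        ring


section OneD

lemma nfloor_mul_le {t u : ℝ} (ht : 0 < t) (hu : 0 ≤ u) : (⌊u/t⌋₊ : ℝ) * t ≤ u := by
  rw [← le_div_iff₀ ht]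
  exact Nat.floor_le (by positivity)

lemma lt_nfloor_succ_mul {t : ℝ} (ht : 0 < t) (u : ℝ) : u < ((⌊u/t⌋₊ : ℝ) + 1) * t := by
  rw [← div_lt_iff₀ ht]
  exact Nat.lt_floor_add_one _

lemma nfloor_lt {t u : ℝ} (ht : 0 < t) (hu : 0 ≤ u) {N : ℕ} (hus : u < (N:ℝ) * t) :
    ⌊u/t⌋₊ < N := by
  rw [Nat.floor_lt (by positivity)]
  rw [div_lt_iff₀ ht]
  exact hus

lemma nfloor_eq {t u : ℝ} (ht : 0 < t) {j : ℕ} (h1 : (j:ℝ)*t ≤ u)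
    (h2 : u < ((j:ℝ)+1)*t) : ⌊u/t⌋₊ = j := by
  have hu : 0 ≤ u := le_trans (by positivity) h1
  rw [Nat.floor_eq_iff (by positivity)]
  constructor
  · rw [le_div_iff₀ ht]; exact h1
  · rw [div_lt_iff₀ ht]; exact h2

lemma div_coarsen_le (j q : ℕ) (hq : 0 < q) {t : ℝ} (ht : 0 < t) :
    ((j / q : ℕ) : ℝ) * ((q:ℝ) * t) ≤ (j:ℝ) * t := by
  have h1 : (j / q) * q ≤ j := Nat.div_mul_le_self j q
  have h1' : (((j/q) * q : ℕ) : ℝ) ≤ (j : ℝ) := by exact_mod_cast h1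
  push_cast at h1'
  nlinarith

lemma div_coarsen_ge (j q : ℕ) (hq : 0 < q) {t : ℝ} (ht : 0 < t) :
    ((j:ℝ)+1) * t ≤ (((j / q : ℕ) : ℝ)+1) * ((q:ℝ) * t) := by
  have h1 : j + 1 ≤ ((j / q) + 1) * q := by
    have h2 := Nat.div_add_mod j q
    have h3 := Nat.mod_lt j hq
    nlinarith [h2, h3]
  have h1' : ((j + 1 : ℕ) : ℝ) ≤ ((((j/q) + 1) * q : ℕ) : ℝ) := by exact_mod_cast h1
  push_cast at h1'
  nlinarith

end OneD

section Dyadic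

/-- The half-open dyadic "box" of a cube. -/
def box (Q : Cube n) : Set (Pt n) :=
  {x : Pt n | ∀ i, Q.center i - Q.side/2 ≤ x i ∧ x i < Q.center i + Q.side/2}

/-- Dyadic subcube of `R` at generation `k` with position `j`. -/
def subCube (R : Cube n) (k : ℕ) (j : Fin n → ℕ) : Cube n :=
  ⟨WithLp.toLp 2 (fun i => (R.center i - R.side/2) + ((j i : ℝ) + 1/2) * (R.side/2^k) : Fin n → ℝ),
    R.side/2^k⟩

lemma subCube_side (R : Cube n) (k : ℕ) (j : Fin n → ℕ) :
    (subCube R k j).side = R.side/2^k := rfl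

lemma subCube_center (R : Cube n) (k : ℕ) (j : Fin n → ℕ) (i : Fin n) :
    (subCube R k j).center i = (R.center i - R.side/2) + ((j i : ℝ) + 1/2) * (R.side/2^k) :=
  rfl

lemma subCube_zero (R : Cube n) : subCube R 0 (fun _ => 0) = R := by
  have hc : (subCube R 0 (fun _ => 0)).center = R.center := by
    ext i
    rw [subCube_center]
    push_cast
    ring
  have hs : (subCube R 0 (fun _ => 0)).side = R.side := by
    rw [subCube_side]; norm_num
  calc subCube R 0 (fun _ => 0)
      = ⟨(subCube R 0 (fun _ => 0)).center, (subCube R 0 (fun _ => 0)).side⟩ := rfl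
    _ = ⟨R.center, R.side⟩ := by rw [hc, hs]
    _ = R := by cases R; rfl

lemma mem_box_subCube {R : Cube n} {k : ℕ} {j : Fin n → ℕ} {x : Pt n} :
    x ∈ box (subCube R k j) ↔ ∀ i,
      (R.center i - R.side/2) + (j i : ℝ) * (R.side/2^k) ≤ x i ∧
      x i < (R.center i - R.side/2) + ((j i : ℝ) + 1) * (R.side/2^k) := by
  constructor <;> intro h i <;> obtain ⟨h1, h2⟩ := h i <;>
    rw [subCube_center, subCube_side] at * <;> constructor <;> nlinarith [h1, h2]

lemma mem_toSet_subCube {R : Cube n} {k : ℕ} {j : Fin n → ℕ} {x : Pt n} :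
    x ∈ (subCube R k j).toSet ↔ ∀ i,
      (R.center i - R.side/2) + (j i : ℝ) * (R.side/2^k) ≤ x i ∧
      x i ≤ (R.center i - R.side/2) + ((j i : ℝ) + 1) * (R.side/2^k) := by
  constructor <;> intro h i <;> have h1 := h i
  · rw [abs_le] at h1
    rw [subCube_center, subCube_side] at h1
    constructor <;> nlinarith [h1.1, h1.2]
  · rw [abs_le, subCube_center, subCube_side]
    constructor <;> nlinarith [h1.1, h1.2]

lemma box_subset_toSet (Q : Cube n) : box Q ⊆ Q.toSet := by
  intro x hx i
  obtain ⟨h1, h2⟩ := hx i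
  rw [abs_le]
  constructor <;> nlinarith

/-- index of the dyadic box of generation `k` containing `x`. -/
def idx (R : Cube n) (k : ℕ) (x : Pt n) : Fin n → ℕ :=
  fun i => ⌊(x i - (R.center i - R.side/2)) / (R.side/2^k)⌋₊

lemma mem_box_idx {R : Cube n} (hs : 0 < R.side) {x : Pt n} (hx : x ∈ box R) (k : ℕ) :
    x ∈ box (subCube R k (idx R k x)) ∧ ∀ i, idx R k x i < 2^k := by
  have ht : (0:ℝ) < R.side/2^k := by positivity
  constructor
  · rw [mem_box_subCube]
    intro i
    have hu : 0 ≤ x i - (R.center i - R.side/2) := by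
      have := (hx i).1; linarith
    constructor
    · have := nfloor_mul_le ht hu
      rw [idx]; linarith
    · have := lt_nfloor_succ_mul ht (x i - (R.center i - R.side/2))
      rw [idx]; linarith
  · intro i
    apply nfloor_lt ht
    · have := (hx i).1; linarith
    · have h2 := (hx i).2
      have h3 : ((2^k : ℕ) : ℝ) * (R.side/2^k) = R.side := by
        push_cast; field_simp
      rw [h3]; linarith

lemma idx_eq_of_mem_box {R : Cube n} (hs : 0 < R.side) {k : ℕ} {j : Fin n → ℕ} {x : Pt n}
    (hx : x ∈ box (subCube R k j)) : idx R k x = j := by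
  have ht : (0:ℝ) < R.side/2^k := by positivity
  funext i
  rw [mem_box_subCube] at hx
  obtain ⟨h1, h2⟩ := hx i
  exact nfloor_eq ht (by linarith) (by linarith)

lemma box_subCube_chain {R : Cube n} (hs : 0 < R.side) {m k : ℕ} (hmk : m ≤ k)
    (j : Fin n → ℕ) :
    box (subCube R k j) ⊆ box (subCube R m (fun i => j i / 2^(k-m))) := by
  intro x hx
  rw [mem_box_subCube] at hx ⊢
  intro i
  obtain ⟨h1, h2⟩ := hx i
  have ht : (0:ℝ) < R.side/2^k := by positivity
  have hq : (0:ℕ) < 2^(k-m) := Nat.pow_pos (by norm_num)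
  have hqt : ((2^(k-m) : ℕ) : ℝ) * (R.side/2^k) = R.side/2^m := by
    have hk' : (2:ℝ)^(k-m) * 2^m = 2^k := by
      rw [← pow_add]
      congr 1
      omega
    push_cast
    field_simp
    nlinarith [hk']
  constructor
  · have := div_coarsen_le (j i) (2^(k-m)) hq ht
    rw [hqt] at this
    linarith
  · have := div_coarsen_ge (j i) (2^(k-m)) hq ht
    rw [hqt] at this
    linarith

lemma toSet_subCube_chain {R : Cube n} (hs : 0 < R.side) {m k : ℕ} (hmk : m ≤ k)
    (j : Fin n → ℕ) :
    (subCube R k j).toSet ⊆ (subCube R m (fun i => j i / 2^(k-m))).toSet := by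
  intro x hx
  rw [mem_toSet_subCube] at hx ⊢
  intro i
  obtain ⟨h1, h2⟩ := hx i
  have ht : (0:ℝ) < R.side/2^k := by positivity
  have hq : (0:ℕ) < 2^(k-m) := Nat.pow_pos (by norm_num)
  have hqt : ((2^(k-m) : ℕ) : ℝ) * (R.side/2^k) = R.side/2^m := by
    have hk' : (2:ℝ)^(k-m) * 2^m = 2^k := by
      rw [← pow_add]
      congr 1
      omega
    push_cast
    field_simp
    nlinarith [hk']
  constructor
  · have := div_coarsen_le (j i) (2^(k-m)) hq ht
    rw [hqt] at this
    linarith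
  · have := div_coarsen_ge (j i) (2^(k-m)) hq ht
    rw [hqt] at this
    linarith

lemma subCube_toSet_subset {R : Cube n} (hs : 0 < R.side) {k : ℕ} {j : Fin n → ℕ}
    (hj : ∀ i, j i < 2^k) : (subCube R k j).toSet ⊆ R.toSet := by
  intro x hx
  rw [mem_toSet_subCube] at hx
  intro i
  obtain ⟨h1, h2⟩ := hx i
  have ht : (0:ℝ) < R.side/2^k := by positivity
  have hj1 : ((j i : ℝ) + 1) ≤ (2:ℝ)^k := by
    have : (j i) + 1 ≤ 2^k := hj i
    exact_mod_cast this
  have h4 : ((j i : ℝ) + 1) * (R.side/2^k) ≤ R.side := by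
    calc ((j i : ℝ) + 1) * (R.side/2^k) ≤ (2:ℝ)^k * (R.side/2^k) := by
          apply mul_le_mul_of_nonneg_right hj1 (le_of_lt ht)
      _ = R.side := by field_simp
  have h5 : (0:ℝ) ≤ (j i : ℝ) * (R.side/2^k) := by positivity
  rw [abs_le]
  constructor <;> nlinarith

lemma box_disjoint {R : Cube n} (hs : 0 < R.side) {k : ℕ} {j j' : Fin n → ℕ}
    (hne : j ≠ j') : Disjoint (box (subCube R k j)) (box (subCube R k j')) := by
  rw [Set.disjoint_left]
  intro x hx hx'
  have h1 := idx_eq_of_mem_box hs hx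
  have h2 := idx_eq_of_mem_box hs hx'
  exact hne (h1 ▸ h2 ▸ rfl)

lemma subCube_succ_child {R : Cube n} {k : ℕ} (j : Fin n → ℕ) (i : Fin n) :
    (subCube R (k+1) j).center i = (subCube R k (fun i' => j i' / 2)).center i +
      (if (j i % 2 = 1) then (R.side/2^k)/4 else -((R.side/2^k)/4)) := by
  rw [subCube_center, subCube_center]
  have h2 := Nat.div_add_mod (j i) 2
  rcases Nat.mod_two_eq_zero_or_one (j i) with hr | hr
  · rw [hr] at h2
    rw [hr]
    norm_num
    have hj : (j i : ℝ) = 2 * ((j i / 2 : ℕ) : ℝ) := by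
      exact_mod_cast (by omega : j i = 2 * (j i / 2))
    rw [hj, pow_succ]
    ring
  · rw [hr] at h2
    rw [hr]
    norm_num
    have hj : (j i : ℝ) = 2 * ((j i / 2 : ℕ) : ℝ) + 1 := by
      exact_mod_cast (by omega : j i = 2 * (j i / 2) + 1)
    rw [hj, pow_succ]
    ring

end Dyadic

section CubeTop

lemma cube_isClosed (Q : Cube n) : IsClosed Q.toSet := by
  have : Q.toSet = ⋂ i, {x : Pt n | |x i - Q.center i| ≤ Q.side / 2} := by
    ext x; simp [Cube.toSet, Set.mem_iInter]
  rw [this]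
  apply isClosed_iInter
  intro i
  apply isClosed_le _ continuous_const
  exact (((EuclideanSpace.proj (𝕜 := ℝ) i).continuous).sub continuous_const).abs

lemma cube_isCompact (Q : Cube n) : IsCompact Q.toSet := by
  apply Metric.isCompact_of_isClosed_isBounded (cube_isClosed Q)
  apply Bornology.IsBounded.subset (Metric.isBounded_closedBall
    (x := Q.center) (r := (n+1) * (|Q.side|/2)))
  intro x hx
  rw [Metric.mem_closedBall]
  apply dist_le_of_coords (by positivity)
  intro i
  exact le_trans (hx i) (by
    cases abs_cases Q.side <;> rcases le_or_gt 0 Q.side with h | h <;>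
      simp [abs_of_nonneg, abs_of_neg, le_refl] <;> linarith [abs_nonneg Q.side, le_abs_self Q.side])

lemma cube_measurableSet (Q : Cube n) : MeasurableSet Q.toSet :=
  (cube_isClosed Q).measurableSet

lemma box_measurableSet (Q : Cube n) : MeasurableSet (box Q) := by
  have : box Q = ⋂ i, ({x : Pt n | Q.center i - Q.side/2 ≤ x i} ∩
      {x : Pt n | x i < Q.center i + Q.side/2}) := by
    ext x; simp [box, Set.mem_iInter, forall_and]
  rw [this]
  apply MeasurableSet.iInter
  intro i
  apply MeasurableSet.inter
  · exact measurableSet_le measurable_const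
      ((EuclideanSpace.proj (𝕜 := ℝ) i).continuous.measurable)
  · exact measurableSet_lt ((EuclideanSpace.proj (𝕜 := ℝ) i).continuous.measurable)
      measurable_const

lemma center_mem_toSet {Q : Cube n} (hs : 0 ≤ Q.side) : Q.center ∈ Q.toSet := by
  intro i
  simp only [sub_self, abs_zero]
  linarith

end CubeTop

section MeasureLemmas

variable {μ : MeasureTheory.Measure (Pt n)}

lemma cube_measure_lt_top [MeasureTheory.IsLocallyFiniteMeasure μ] (Q : Cube n) :
    μ Q.toSet < ⊤ :=
  (cube_isCompact Q).measure_lt_top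

lemma dilate_dilate (Q : Cube n) (a b : ℝ) :
    (Q.dilate a).dilate b = Q.dilate (b * a) := by
  simp only [Cube.dilate, Cube.mk.injEq]
  refine ⟨trivial, by ring⟩

lemma measure_dilate_pow {Cd : ℝ} (hμ : IsDoubling μ Cd) (Q : Cube n)
    (hs : 0 < Q.side) (k : ℕ) :
    μ (Q.dilate (2^k)).toSet ≤ (ENNReal.ofReal Cd)^k * μ Q.toSet := by
  induction k with
  | zero =>
    simp only [pow_zero, one_mul]
    have : Q.dilate 1 = Q := by
      simp [Cube.dilate]
    rw [this]
  | succ k ih =>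
    have h1 : Q.dilate (2^(k+1)) = (Q.dilate (2^k)).dilate 2 := by
      rw [dilate_dilate]
      congr 1
      ring
    rw [h1]
    have h2 : 0 < (Q.dilate (2^k)).side := by
      simp only [Cube.dilate]
      positivity
    calc μ ((Q.dilate (2^k)).dilate 2).toSet
        ≤ ENNReal.ofReal Cd * μ (Q.dilate (2^k)).toSet := hμ _ h2
      _ ≤ ENNReal.ofReal Cd * ((ENNReal.ofReal Cd)^k * μ Q.toSet) := by
          exact mul_le_mul_right ih _
      _ = (ENNReal.ofReal Cd)^(k+1) * μ Q.toSet := by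
          rw [pow_succ]
          ring

/-- Iterated doubling: a subcube of comparable size has comparable measure. -/
lemma measure_subcube_ge {Cd : ℝ} (hμ : IsDoubling μ Cd) {S R : Cube n}
    (hS : 0 < S.side) (hsub : S.toSet ⊆ R.toSet) {k : ℕ}
    (hk : R.side ≤ 2^k * S.side / 2) :
    μ R.toSet ≤ (ENNReal.ofReal Cd)^k * μ S.toSet := by
  have hcov : R.toSet ⊆ (S.dilate (2^k)).toSet := by
    intro x hx
    intro i
    have h1 : S.center ∈ R.toSet := hsub (center_mem_toSet (le_of_lt hS))
    have h2 := h1 i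
    have h3 := hx i
    have h4 : |x i - S.center i| ≤ R.side := by
      calc |x i - S.center i| = |(x i - R.center i) + (R.center i - S.center i)| := by
            ring_nf
        _ ≤ |x i - R.center i| + |R.center i - S.center i| := abs_add_le _ _
        _ ≤ R.side/2 + R.side/2 := by
            rw [abs_sub_comm (R.center i)]
            exact add_le_add h3 h2
        _ = R.side := by ring
    show |x i - S.center i| ≤ (2^k * S.side) / 2
    exact le_trans h4 hk
  calc μ R.toSet ≤ μ (S.dilate (2^k)).toSet := MeasureTheory.measure_mono hcov
    _ ≤ (ENNReal.ofReal Cd)^k * μ S.toSet := measure_dilate_pow hμ S hS k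

end MeasureLemmas


section Key

open MeasureTheory

lemma ennreal_step {A B T : ℝ≥0∞} {ε : ℝ} (hε0 : 0 ≤ ε) (hε1 : ε ≤ 1) (hT : T ≠ ⊤)
    (hAB : A + B ≤ T) (hB : ENNReal.ofReal ε * T ≤ B) :
    A ≤ ENNReal.ofReal (1 - ε) * T := by
  have hfin : ENNReal.ofReal ε * T ≠ ⊤ := ENNReal.mul_ne_top ENNReal.ofReal_ne_top hT
  have h1 : A + ENNReal.ofReal ε * T ≤ T := le_trans (add_le_add le_rfl hB) hAB
  have h2 : ENNReal.ofReal (1 - ε) * T + ENNReal.ofReal ε * T = T := by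
    rw [← add_mul, ← ENNReal.ofReal_add (by linarith) hε0]
    norm_num
  nth_rewrite 2 [← h2] at h1
  exact (ENNReal.add_le_add_iff_right hfin).mp h1

set_option maxHeartbeats 2000000 in
lemma exists_good_subcube {C₁ : ℝ} (hC₁ : 1 ≤ C₁) {ρ : ℝ} (hρpos : 0 < ρ)
    (hρhalf : ρ ≤ 1/2) (hρ : ρ ≤ 1/(6*(n+1)*C₁)) {R : Cube n} (hs : 0 < R.side)
    {f : Pt n → ℝ}
    (hlip : ∀ x y : Pt n, (∀ i, |x i - R.center i| ≤ 3*R.side/2) →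
      (∀ i, |y i - R.center i| ≤ 3*R.side/2) → |f x - f y| ≤ C₁ / R.side * dist x y)
    (hxe : ∃ x ∈ R.toSet, 1 ≤ |f x|) :
    ∃ S : Cube n, S.side = ρ * R.side ∧ S.toSet ⊆ box R ∧ ∀ y ∈ S.toSet, 3/4 ≤ |f y| := by
  obtain ⟨x₀, hx₀R, hx₀⟩ := hxe
  set s := R.side with hsdef
  set z : Pt n := WithLp.toLp 2 (fun i => max (R.center i - s/2 + ρ*s) (min (x₀ i) (R.center i + s/2 - ρ*s))
    : Fin n → ℝ) with hz
  have hwin : ∀ i, R.center i - s/2 + ρ*s ≤ R.center i + s/2 - ρ*s := by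
    intro i
    have : ρ * s ≤ (1/2) * s := mul_le_mul_of_nonneg_right hρhalf (le_of_lt hs)
    linarith
  have hzmem : ∀ i, R.center i - s/2 + ρ*s ≤ z i ∧ z i ≤ R.center i + s/2 - ρ*s := by
    intro i
    constructor
    · exact le_max_left _ _
    · rw [hz]
      simp only
      rw [max_le_iff]
      exact ⟨hwin i, min_le_right _ _⟩
  have hzx₀ : ∀ i, |z i - x₀ i| ≤ ρ * s := by
    intro i
    have hx₀i := hx₀R i
    rw [abs_le] at hx₀i ⊢
    obtain ⟨ha, hb⟩ := hx₀i
    rcases le_or_gt (x₀ i) (R.center i - s/2 + ρ*s) with h | h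
    · have hze : z i = R.center i - s/2 + ρ*s := by
        rw [hz]
        simp only
        rw [max_eq_left]
        rw [min_le_iff]
        left; exact h
      rw [hze]
      constructor <;> nlinarith [hρpos, hs]
    · have hze : z i = min (x₀ i) (R.center i + s/2 - ρ*s) := by
        rw [hz]
        simp only
        rw [max_eq_right]
        rw [le_min_iff]
        exact ⟨le_of_lt h, hwin i⟩
      rw [hze]
      rcases le_or_gt (x₀ i) (R.center i + s/2 - ρ*s) with h2 | h2
      · rw [min_eq_left h2]
        constructor <;> nlinarith [hρpos, hs]
      · rw [min_eq_right (le_of_lt h2)]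
        constructor <;> nlinarith [hρpos, hs]
  refine ⟨⟨z, ρ * s⟩, rfl, ?_, ?_⟩
  · intro y hy i
    have hyi := hy i
    simp only at hyi
    rw [abs_le] at hyi
    obtain ⟨h1, h2⟩ := hyi
    obtain ⟨h3, h4⟩ := hzmem i
    constructor
    · show R.center i - s/2 ≤ y i
      nlinarith [hρpos, hs]
    · show y i < R.center i + s/2
      nlinarith [hρpos, hs]
  · intro y hy
    have hyx₀ : ∀ i, |y i - x₀ i| ≤ 3*(ρ*s)/2 := by
      intro i
      have h1 := hy i
      simp only at h1
      have h2 := hzx₀ i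
      calc |y i - x₀ i| = |(y i - z i) + (z i - x₀ i)| := by ring_nf
        _ ≤ |y i - z i| + |z i - x₀ i| := abs_add_le _ _
        _ ≤ (ρ*s)/2 + ρ*s := add_le_add h1 h2
        _ = 3*(ρ*s)/2 := by ring
    have hdist : dist y x₀ ≤ (n+1) * (3*(ρ*s)/2) :=
      dist_le_of_coords (by positivity) hyx₀
    have hy3R : ∀ i, |y i - R.center i| ≤ 3*s/2 := by
      intro i
      have h1 := hy i
      simp only at h1
      obtain ⟨h3, h4⟩ := hzmem i
      rw [abs_le] at h1 ⊢
      constructor <;> nlinarith [hρpos, hs, h1.1, h1.2]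
    have hx3R : ∀ i, |x₀ i - R.center i| ≤ 3*s/2 := by
      intro i
      refine le_trans (hx₀R i) (by linarith)
    have hflip := hlip y x₀ hy3R hx3R
    have hCs : C₁ / s * dist y x₀ ≤ C₁ / s * ((n+1) * (3*(ρ*s)/2)) :=
      mul_le_mul_of_nonneg_left hdist (by positivity)
    have heval : C₁ / s * ((n+1) * (3*(ρ*s)/2)) = (3/2) * (n+1) * C₁ * ρ := by
      field_simp
    have hρbound : (3/2) * (n+1) * C₁ * ρ ≤ 1/4 := by
      have h6 : (0:ℝ) < 6*((n:ℝ)+1)*C₁ := by positivity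
      have hstep : (3/2) * ((n:ℝ)+1) * C₁ * ρ ≤ (3/2) * ((n:ℝ)+1) * C₁ * (1/(6*((n:ℝ)+1)*C₁)) :=
        mul_le_mul_of_nonneg_left hρ (by positivity)
      have heq2 : (3/2) * ((n:ℝ)+1) * C₁ * (1/(6*((n:ℝ)+1)*C₁)) = 1/4 := by
        have h7 : (6*((n:ℝ)+1)*C₁) * (1/(6*((n:ℝ)+1)*C₁)) = 1 :=
          mul_one_div_cancel (ne_of_gt h6)
        linear_combination (1/4) * h7
      linarith
    have : |f x₀| - |f y| ≤ 1/4 := by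
      calc |f x₀| - |f y| ≤ |f x₀ - f y| := by
            have := abs_sub_abs_le_abs_sub (f x₀) (f y)
            linarith
        _ = |f y - f x₀| := abs_sub_comm _ _
        _ ≤ C₁ / s * dist y x₀ := hflip
        _ ≤ (3/2) * (n+1) * C₁ * ρ := by rw [← heval]; exact hCs
        _ ≤ 1/4 := hρbound
    linarith

end Key

section KeyMain

open MeasureTheory

set_option maxHeartbeats 3000000 in
theorem key_induction (n D : ℕ) (Cd : ℝ) (hCd : 1 ≤ Cd) :
    ∃ (γ τ C₁ : ℝ), 1/2 ≤ γ ∧ γ < 1 ∧ 4 ≤ τ ∧ 1 ≤ C₁ ∧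
      (∀ (μ : Measure (Pt n)), IsLocallyFiniteMeasure μ → IsDoubling μ Cd →
        ∀ (m : ℕ) (R : Cube n), 0 < R.side → ∀ f ∈ PC n D,
        (∀ x ∈ R.toSet, |f x| ≤ 1) → (∃ x ∈ R.toSet, 1 ≤ |f x|) →
        ∀ lam : ℝ, 0 ≤ lam → lam ≤ (1/8) * (τ⁻¹)^m →
        μ {x | x ∈ box R ∧ |f x| ≤ lam} ≤ ENNReal.ofReal γ^(m+1) * μ (box R)) ∧
      (∀ (R : Cube n), 0 < R.side → ∀ f ∈ PC n D, (∀ x ∈ R.toSet, |f x| ≤ 1) →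
        (∀ x : Pt n, (∀ i, |x i - R.center i| ≤ 3*R.side/2) → |f x| ≤ C₁) ∧
        (∀ x y : Pt n, (∀ i, |x i - R.center i| ≤ 3*R.side/2) →
          (∀ i, |y i - R.center i| ≤ 3*R.side/2) →
          |f x - f y| ≤ C₁ / R.side * dist x y)) := by
  classical
  obtain ⟨C₁, hC₁, hC₁spec⟩ := exists_lip_const n D
  obtain ⟨c₂, hc₂pos, hc₂le, hc₂spec⟩ := exists_child_const n D
  set ρ : ℝ := min (1/2) (1/(6*((n:ℝ)+1)*C₁)) with hρdef
  have hρpos : 0 < ρ := by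
    apply lt_min (by norm_num)
    positivity
  have hρhalf : ρ ≤ 1/2 := min_le_left _ _
  have hρle : ρ ≤ 1/(6*((n:ℝ)+1)*C₁) := min_le_right _ _
  obtain ⟨k₀, hk₀⟩ : ∃ k₀ : ℕ, 2/ρ < 2^k₀ := pow_unbounded_of_one_lt (2/ρ) one_lt_two
  have h2k₀ : 2 ≤ 2^k₀ * ρ := by
    rw [div_lt_iff₀ hρpos] at hk₀
    nlinarith
  have hCdpos : (0:ℝ) < Cd := by linarith
  set ε : ℝ := (Cd ^ k₀)⁻¹ with hεdef
  have hε0 : 0 < ε := by positivity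
  have hε1 : ε ≤ 1 := by
    rw [hεdef, inv_le_one₀ (by positivity)]
    exact one_le_pow₀ hCd
  set γ : ℝ := max (1 - ε) (1/2) with hγdef
  have hγhalf : 1/2 ≤ γ := le_max_right _ _
  have hγlt : γ < 1 := by
    rw [hγdef, max_lt_iff]
    constructor <;> linarith
  set τ : ℝ := 4 / c₂ with hτdef
  have hτ4 : 4 ≤ τ := by
    rw [hτdef, le_div_iff₀ hc₂pos]
    nlinarith
  have hτpos : 0 < τ := by linarith
  have hτinv : τ⁻¹ = c₂ / 4 := by rw [hτdef, inv_div]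
  have hτinvle : τ⁻¹ ≤ 1 := by
    rw [hτinv]
    linarith
  have hτinvpos : 0 < τ⁻¹ := by positivity
  refine ⟨γ, τ, C₁, hγhalf, hγlt, hτ4, hC₁, ?_, ?_⟩
  swap
  · -- the C₁ facts
    intro R hs f hf hub
    have h := hC₁spec R.center R.side hs f hf (fun y hy => hub y hy)
    exact h
  intro μ hlf hμ
  haveI := hlf
  -- the good subcube with measure bound
  have main_S : ∀ (R : Cube n), 0 < R.side → ∀ f ∈ PC n D,
      (∀ x ∈ R.toSet, |f x| ≤ 1) → (∃ x ∈ R.toSet, 1 ≤ |f x|) →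
      ∃ S : Cube n, S.toSet ⊆ box R ∧ (∀ y ∈ S.toSet, 3/4 ≤ |f y|) ∧
        ENNReal.ofReal ε * μ (box R) ≤ μ S.toSet ∧ MeasurableSet S.toSet := by
    intro R hs f hf hub hxe
    have hlip := (hC₁spec R.center R.side hs f hf (fun y hy => hub y hy)).2
    obtain ⟨S, hSside, hSsub, hSbig⟩ :=
      exists_good_subcube hC₁ hρpos hρhalf hρle hs hlip hxe
    refine ⟨S, hSsub, hSbig, ?_, cube_measurableSet S⟩
    have hSpos : 0 < S.side := by rw [hSside]; positivity
    have hsub2 : S.toSet ⊆ R.toSet := subset_trans hSsub (box_subset_toSet R)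
    have hk : R.side ≤ 2^k₀ * S.side / 2 := by
      rw [hSside]
      rw [le_div_iff₀ (by norm_num : (0:ℝ) < 2)]
      calc R.side * 2 = 2 * R.side := by ring
        _ ≤ (2^k₀ * ρ) * R.side := by nlinarith
        _ = 2^k₀ * (ρ * R.side) := by ring
    have hmeas := measure_subcube_ge hμ hSpos hsub2 hk
    have hfin : μ S.toSet ≠ ⊤ := (lt_of_le_of_lt (measure_mono hsub2)
      (cube_measure_lt_top R)).ne
    calc ENNReal.ofReal ε * μ (box R) ≤ ENNReal.ofReal ε * μ R.toSet := by
          exact mul_le_mul_right (measure_mono (box_subset_toSet R)) _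
      _ ≤ ENNReal.ofReal ε * ((ENNReal.ofReal Cd)^k₀ * μ S.toSet) :=
          mul_le_mul_right hmeas _
      _ = (ENNReal.ofReal ε * (ENNReal.ofReal Cd)^k₀) * μ S.toSet := by ring
      _ = μ S.toSet := by
          rw [← ENNReal.ofReal_pow (le_of_lt hCdpos), ← ENNReal.ofReal_mul (le_of_lt hε0)]
          rw [hεdef, inv_mul_cancel₀ (by positivity)]
          simp
  intro m
  induction m with
  | zero =>
    intro R hs f hf hub hxe lam hlam0 hlamle
    simp only [pow_zero, mul_one] at hlamle
    obtain ⟨S, hSsub, hSbig, hSmeas, hSmeasurable⟩ := main_S R hs f hf hub hxe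
    set E : Set (Pt n) := {x | x ∈ box R ∧ |f x| ≤ lam} with hE
    have hEsub : E ⊆ box R := fun x hx => hx.1
    have hdisj : Disjoint E S.toSet := by
      rw [Set.disjoint_left]
      intro x hx hxS
      have := hSbig x hxS
      have := hx.2
      linarith
    have hT : μ (box R) ≠ ⊤ := (lt_of_le_of_lt (measure_mono (box_subset_toSet R))
      (cube_measure_lt_top R)).ne
    have hAB : μ E + μ S.toSet ≤ μ (box R) := by
      rw [← measure_union hdisj hSmeasurable]
      apply measure_mono
      exact Set.union_subset hEsub hSsub
    have := ennreal_step (le_of_lt hε0) hε1 hT hAB hSmeas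
    calc μ E ≤ ENNReal.ofReal (1-ε) * μ (box R) := this
      _ ≤ ENNReal.ofReal γ ^ (0+1) * μ (box R) := by
          rw [pow_one]
          exact mul_le_mul_left (ENNReal.ofReal_le_ofReal (le_max_left _ _)) _
  | succ m ih =>
    intro R hs f hfPC hub hxe lam hlam0 hlamle
    obtain ⟨S, hSsub, hSbig, hSmeas, hSmeasurable⟩ := main_S R hs f hfPC hub hxe
    have hlip := (hC₁spec R.center R.side hs f hfPC (fun y hy => hub y hy)).2
    set s := R.side with hsdef
    have hlam18 : lam ≤ 1/8 := by
      have h1 : (τ⁻¹)^(m+1) ≤ 1 := pow_le_one₀ (le_of_lt hτinvpos) hτinvle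
      nlinarith
    -- Small predicate and selection
    set Small : ℕ → (Fin n → ℕ) → Prop :=
      fun k j => ∀ y ∈ (subCube R k j).toSet, |f y| < 1/4 with hSmall
    set Sel : Set (ℕ × (Fin n → ℕ)) :=
      {p | (∀ i, p.2 i < 2^p.1) ∧ 1 ≤ p.1 ∧ Small p.1 p.2 ∧
        ¬ Small (p.1 - 1) (fun i => p.2 i / 2)} with hSel
    -- each selected box is inside box R
    have hboxsub : ∀ p ∈ Sel, box (subCube R p.1 p.2) ⊆ box R := by
      intro p hp
      have hj := hp.1
      have h1 := box_subCube_chain hs (Nat.zero_le p.1) p.2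
      have h2 : (fun i => p.2 i / 2^(p.1 - 0)) = (fun _ : Fin n => 0) := by
        funext i
        simp only [Nat.sub_zero]
        exact Nat.div_eq_of_lt (hj i)
      rw [h2, subCube_zero] at h1
      exact h1
    -- coverage
    have hcover : ∀ x, x ∈ box R → |f x| ≤ lam →
        ∃ p ∈ Sel, x ∈ box (subCube R p.1 p.2) := by
      intro x hxbox hxlam
      obtain ⟨k₂, hk₂⟩ : ∃ k₂ : ℕ, 8*(C₁*((n:ℝ)+1)) < 2^k₂ :=
        pow_unbounded_of_one_lt _ one_lt_two
      set P : ℕ → Prop := fun k => Small k (idx R k x) with hP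
      have hPk₂ : P k₂ := by
        intro y hy
        have hrange := (mem_box_idx hs hxbox k₂).2
        have hxin : x ∈ (subCube R k₂ (idx R k₂ x)).toSet :=
          box_subset_toSet _ (mem_box_idx hs hxbox k₂).1
        have hyR : y ∈ R.toSet := subCube_toSet_subset hs hrange hy
        have hxR : x ∈ R.toSet := box_subset_toSet R hxbox
        have hcoord : ∀ i, |y i - x i| ≤ s/2^k₂ := by
          intro i
          have h1 := hy i
          have h2 := hxin i
          rw [subCube_side] at h1 h2
          calc |y i - x i| = |(y i - (subCube R k₂ (idx R k₂ x)).center i) -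
              (x i - (subCube R k₂ (idx R k₂ x)).center i)| := by ring_nf
            _ ≤ |y i - (subCube R k₂ (idx R k₂ x)).center i| +
              |x i - (subCube R k₂ (idx R k₂ x)).center i| := abs_sub _ _
            _ ≤ s/2^k₂/2 + s/2^k₂/2 := add_le_add h1 h2
            _ = s/2^k₂ := by ring
        have hdist : dist y x ≤ ((n:ℝ)+1) * (s/2^k₂) :=
          dist_le_of_coords (by positivity) hcoord
        have h3R : ∀ z : Pt n, z ∈ R.toSet → ∀ i, |z i - R.center i| ≤ 3*s/2 := by
          intro z hz i
          exact le_trans (hz i) (by linarith)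
        have hflip := hlip y x (h3R y hyR) (h3R x hxR)
        have : |f y| - |f x| ≤ C₁/s * (((n:ℝ)+1) * (s/2^k₂)) := by
          calc |f y| - |f x| ≤ |f y - f x| := by
                have := abs_sub_abs_le_abs_sub (f y) (f x)
                linarith
            _ ≤ C₁/s * dist y x := hflip
            _ ≤ C₁/s * (((n:ℝ)+1) * (s/2^k₂)) :=
                mul_le_mul_of_nonneg_left hdist (by positivity)
        have heq : C₁/s * (((n:ℝ)+1) * (s/2^k₂)) = C₁*((n:ℝ)+1)/2^k₂ := by
          field_simp
        have hsmall : C₁*((n:ℝ)+1)/2^k₂ < 1/8 := by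
          rw [div_lt_iff₀ (by positivity)]
          nlinarith
        rw [heq] at this
        linarith
      have hex : ∃ k, P k := ⟨k₂, hPk₂⟩
      set k₁ := Nat.find hex with hk₁def
      have hk₁spec : P k₁ := Nat.find_spec hex
      have hk₁pos : 1 ≤ k₁ := by
        by_contra hcon
        push_neg at hcon
        have hk0 : k₁ = 0 := by omega
        have h0 : Small 0 (idx R 0 x) := by
          have h0' := hk₁spec
          rw [hk0] at h0'
          exact h0'
        have hidx0 : idx R 0 x = (fun _ : Fin n => 0) := by
          funext i
          have := (mem_box_idx hs hxbox 0).2 i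
          omega
        obtain ⟨x₀, hx₀R, hx₀⟩ := hxe
        have hx₀mem : x₀ ∈ (subCube R 0 (idx R 0 x)).toSet := by
          rw [hidx0, subCube_zero]
          exact hx₀R
        have := h0 x₀ hx₀mem
        linarith
      have hxmem : x ∈ box (subCube R k₁ (idx R k₁ x)) := (mem_box_idx hs hxbox k₁).1
      have hrange : ∀ i, idx R k₁ x i < 2^k₁ := (mem_box_idx hs hxbox k₁).2
      have hnotsmall : ¬ Small (k₁ - 1) (fun i => idx R k₁ x i / 2) := by
        have hprev : idx R (k₁ - 1) x = fun i => idx R k₁ x i / 2 := by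
          have hch := box_subCube_chain hs (Nat.sub_le k₁ 1) (idx R k₁ x) hxmem
          have hexp : k₁ - (k₁ - 1) = 1 := by omega
          rw [hexp] at hch
          have := idx_eq_of_mem_box hs hch
          rw [this]
          funext i
          norm_num
        have hmin : ¬ P (k₁ - 1) := Nat.find_min hex (by omega)
        have hmin2 : ¬ Small (k₁ - 1) (idx R (k₁ - 1) x) := hmin
        rw [hprev] at hmin2
        exact hmin2
      exact ⟨(k₁, idx R k₁ x), ⟨hrange, hk₁pos, hk₁spec, hnotsmall⟩, hxmem⟩
    -- pairwise disjointness
    have hdisjSel : ∀ p ∈ Sel, ∀ q ∈ Sel, p ≠ q →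
        Disjoint (box (subCube R p.1 p.2)) (box (subCube R q.1 q.2)) := by
      have haux : ∀ p ∈ Sel, ∀ q ∈ Sel, p.1 < q.1 →
          Disjoint (box (subCube R p.1 p.2)) (box (subCube R q.1 q.2)) := by
        intro p hp q hq hpq
        rw [Set.disjoint_left]
        intro x hxp hxq
        have h1 : idx R p.1 x = p.2 := idx_eq_of_mem_box hs hxp
        have hch := box_subCube_chain hs (le_of_lt hpq) q.2 hxq
        have h2 : idx R p.1 x = fun i => q.2 i / 2^(q.1 - p.1) :=
          idx_eq_of_mem_box hs hch
        have h3 : p.2 = fun i => q.2 i / 2^(q.1 - p.1) := by rw [← h1, h2]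
        -- now Small p.1 p.2 contradicts ¬ Small (q.1-1) (q.2/2)
        apply hq.2.2.2
        intro y hy
        apply hp.2.2.1
        have hchain := toSet_subCube_chain hs (show p.1 ≤ q.1 - 1 by omega)
          (fun i => q.2 i / 2) hy
        have h4 : (fun i => (q.2 i / 2) / 2^(q.1 - 1 - p.1)) = p.2 := by
          funext i
          rw [Nat.div_div_eq_div_mul]
          rw [h3]
          congr 1
          have : 2 * 2^(q.1 - 1 - p.1) = 2^(q.1 - p.1) := by
            rw [← pow_succ']
            congr 1
            omega
          omega
        rw [h4] at hchain
        exact hchain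
      intro p hp q hq hne
      rcases lt_trichotomy p.1 q.1 with h | h | h
      · exact haux p hp q hq h
      · rw [Set.disjoint_left]
        intro x hxp hxq
        have h1 : idx R p.1 x = p.2 := idx_eq_of_mem_box hs hxp
        have h2 : idx R q.1 x = q.2 := idx_eq_of_mem_box hs hxq
        rw [h] at h1
        apply hne
        have : p.2 = q.2 := by rw [← h1, h2]
        exact Prod.ext h this
      · exact (haux q hq p hp h).symm
    -- per-box estimate
    set E : Set (Pt n) := {x | x ∈ box R ∧ |f x| ≤ lam} with hE
    have hperbox : ∀ p ∈ Sel,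
        μ (E ∩ box (subCube R p.1 p.2)) ≤
          ENNReal.ofReal γ^(m+1) * μ (box (subCube R p.1 p.2)) := by
      rintro ⟨k, j⟩ hp
      obtain ⟨hrange, hkpos, hsmall, hnotsmall⟩ := hp
      simp only at hrange hkpos hsmall hnotsmall ⊢
      obtain ⟨k', rfl⟩ : ∃ k', k = k' + 1 := ⟨k - 1, by omega⟩
      set B := subCube R (k'+1) j with hB
      have hBside : B.side = s/2^(k'+1) := rfl
      have hBpos : 0 < B.side := by rw [hBside]; positivity
      -- max of |f| on B
      have hcopy : f ∈ PC n D := hfPC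
      obtain ⟨c, hc⟩ := hcopy
      have hcont : ContinuousOn (fun y => |f y|) B.toSet := by
        rw [hc]
        exact (L_continuous c).abs.continuousOn
      obtain ⟨xm, hxmB, hxmax⟩ := (cube_isCompact B).exists_isMaxOn
        ⟨B.center, center_mem_toSet (le_of_lt hBpos)⟩ hcont
      set MB := |f xm| with hMB
      have hub' : ∀ y ∈ B.toSet, |f y| ≤ MB := by
        intro y hy
        exact hxmax hy
      -- parent and lower bound on MB
      set Pa := subCube R k' (fun i => j i / 2) with hPa
      have hPaside : Pa.side = s/2^k' := rfl
      have hPapos : 0 < Pa.side := by rw [hPaside]; positivity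
      obtain ⟨y₀, hy₀Pa, hy₀⟩ : ∃ y ∈ Pa.toSet, 1/4 ≤ |f y| := by
        by_contra hcon
        push_neg at hcon
        apply hnotsmall
        intro y hy
        exact hcon y hy
      have hMB0 : 0 ≤ MB := abs_nonneg _
      have hchild : ∀ x : Pt n,
          (∀ i, |x i - (Pa.center i + (if (decide (j i % 2 = 1)) then Pa.side/4
            else -(Pa.side/4)))| ≤ Pa.side/4) → |f x| ≤ MB := by
        intro x hx
        apply hub'
        intro i
        have h1 := hx i
        have h2 := subCube_succ_child (R := R) (k := k') j i
        have h3 : (if (decide (j i % 2 = 1)) then Pa.side/4 else -(Pa.side/4))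
            = (if j i % 2 = 1 then (R.side/2^k')/4 else -((R.side/2^k')/4)) := by
          rw [hPaside]
          by_cases hpar : j i % 2 = 1 <;> simp [hpar, hsdef]
        rw [h3] at h1
        rw [← h2] at h1
        have h4 : B.side / 2 = Pa.side/4 := by
          rw [hBside, hPaside, pow_succ]
          ring
        rw [h4, hPaside]
        exact h1
      have hMBc₂ := hc₂spec Pa.center Pa.side hPapos f hfPC MB hMB0
        (fun i => decide (j i % 2 = 1)) hchild y₀ hy₀Pa
      have hMBτ : τ⁻¹ ≤ MB := by
        rw [hτinv]
        rw [le_div_iff₀ hc₂pos] at hMBc₂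
        nlinarith
      have hMBpos : 0 < MB := lt_of_lt_of_le hτinvpos hMBτ
      -- normalized function on B
      set g : Pt n → ℝ := fun y => MB⁻¹ * f y with hg
      have hgPC : g ∈ PC n D := PC_smul hfPC MB⁻¹
      have hgub : ∀ y ∈ B.toSet, |g y| ≤ 1 := by
        intro y hy
        rw [hg]
        simp only [abs_mul, abs_inv, abs_of_pos hMBpos]
        rw [inv_mul_le_iff₀ hMBpos, mul_one]
        exact hub' y hy
      have hgex : ∃ y ∈ B.toSet, 1 ≤ |g y| := by
        refine ⟨xm, hxmB, ?_⟩
        rw [hg]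
        simp only [abs_mul, abs_inv, abs_of_pos hMBpos]
        rw [← hMB, inv_mul_cancel₀ (ne_of_gt hMBpos)]
      have hlamτ : lam * τ ≤ (1/8) * (τ⁻¹)^m := by
        have h1 : lam * τ ≤ ((1/8) * (τ⁻¹)^(m+1)) * τ :=
          mul_le_mul_of_nonneg_right hlamle (le_of_lt hτpos)
        have h2 : ((1/8) * (τ⁻¹)^(m+1)) * τ = (1/8) * (τ⁻¹)^m := by
          rw [pow_succ]
          field_simp
        linarith
      have hEsub : E ∩ box B ⊆ {x | x ∈ box B ∧ |g x| ≤ lam * τ} := by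
        rintro x ⟨hxE, hxB⟩
        refine ⟨hxB, ?_⟩
        rw [hg]
        simp only [abs_mul, abs_inv, abs_of_pos hMBpos]
        have hMBinv : MB⁻¹ ≤ τ := by
          rw [← inv_inv τ]
          exact inv_anti₀ hτinvpos hMBτ
        calc MB⁻¹ * |f x| ≤ τ * lam := by
              apply mul_le_mul hMBinv hxE.2 (abs_nonneg _) (le_of_lt hτpos)
          _ = lam * τ := by ring
      calc μ (E ∩ box B) ≤ μ {x | x ∈ box B ∧ |g x| ≤ lam * τ} :=
            measure_mono hEsub
        _ ≤ ENNReal.ofReal γ^(m+1) * μ (box B) :=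
            ih B hBpos g hgPC hgub hgex (lam * τ) (by positivity) hlamτ
    -- assemble
    have hcount : Sel.Countable := Set.to_countable _
    have hEcup : E ⊆ ⋃ p ∈ Sel, (E ∩ box (subCube R p.1 p.2)) := by
      intro x hx
      obtain ⟨p, hpSel, hpx⟩ := hcover x hx.1 hx.2
      exact Set.mem_biUnion hpSel ⟨hx, hpx⟩
    have hstep1 : μ E ≤ ∑' (p : Sel), μ (E ∩ box (subCube R p.1.1 p.1.2)) := by
      calc μ E ≤ μ (⋃ p ∈ Sel, (E ∩ box (subCube R p.1 p.2))) := measure_mono hEcup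
        _ ≤ ∑' (p : Sel), μ (E ∩ box (subCube R p.1.1 p.1.2)) :=
            measure_biUnion_le μ hcount _
    have hstep2 : ∑' (p : Sel), μ (E ∩ box (subCube R p.1.1 p.1.2)) ≤
        ENNReal.ofReal γ^(m+1) * ∑' (p : Sel), μ (box (subCube R p.1.1 p.1.2)) := by
      rw [← ENNReal.tsum_mul_left]
      apply ENNReal.tsum_le_tsum
      intro p
      exact hperbox p.1 p.2
    have hstep3 : ∑' (p : Sel), μ (box (subCube R p.1.1 p.1.2)) =
        μ (⋃ (p : Sel), box (subCube R p.1.1 p.1.2)) := by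
      rw [measure_iUnion]
      · intro p q hne
        apply hdisjSel p.1 p.2 q.1 q.2
        intro h
        exact hne (Subtype.ext h)
      · intro p
        exact box_measurableSet _
    have hUsub : (⋃ (p : Sel), box (subCube R p.1.1 p.1.2)) ⊆ box R := by
      apply Set.iUnion_subset
      intro p
      exact hboxsub p.1 p.2
    have hUdisj : Disjoint (⋃ (p : Sel), box (subCube R p.1.1 p.1.2)) S.toSet := by
      rw [Set.disjoint_left]
      intro x hx hxS
      rw [Set.mem_iUnion] at hx
      obtain ⟨p, hp⟩ := hx
      have hSmallp := p.2.2.2.1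
      have hxtoSet : x ∈ (subCube R p.1.1 p.1.2).toSet := box_subset_toSet _ hp
      have := hSmallp x hxtoSet
      have := hSbig x hxS
      linarith
    have hT : μ (box R) ≠ ⊤ := (lt_of_le_of_lt (measure_mono (box_subset_toSet R))
      (cube_measure_lt_top R)).ne
    have hAB : μ (⋃ (p : Sel), box (subCube R p.1.1 p.1.2)) + μ S.toSet ≤ μ (box R) := by
      rw [← measure_union hUdisj hSmeasurable]
      apply measure_mono
      exact Set.union_subset hUsub hSsub
    have hstep4 : μ (⋃ (p : Sel), box (subCube R p.1.1 p.1.2)) ≤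
        ENNReal.ofReal γ * μ (box R) := by
      have := ennreal_step (le_of_lt hε0) hε1 hT hAB hSmeas
      calc μ (⋃ (p : Sel), box (subCube R p.1.1 p.1.2)) ≤
          ENNReal.ofReal (1-ε) * μ (box R) := this
        _ ≤ ENNReal.ofReal γ * μ (box R) :=
            mul_le_mul_left (ENNReal.ofReal_le_ofReal (le_max_left _ _)) _
    calc μ E ≤ ∑' (p : Sel), μ (E ∩ box (subCube R p.1.1 p.1.2)) := hstep1
      _ ≤ ENNReal.ofReal γ^(m+1) * ∑' (p : Sel), μ (box (subCube R p.1.1 p.1.2)) := hstep2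
      _ = ENNReal.ofReal γ^(m+1) * μ (⋃ (p : Sel), box (subCube R p.1.1 p.1.2)) := by
          rw [hstep3]
      _ ≤ ENNReal.ofReal γ^(m+1) * (ENNReal.ofReal γ * μ (box R)) :=
          mul_le_mul_right hstep4 _
      _ = ENNReal.ofReal γ^(m+1+1) * μ (box R) := by
          rw [pow_succ]
          ring

end KeyMain

section Sub

open MeasureTheory

set_option maxHeartbeats 2000000 in
theorem sublevel_bound (n D : ℕ) (Cd : ℝ) (hCd : 1 ≤ Cd) :
    ∃ θ Cs C₁ : ℝ, 0 < θ ∧ 1 ≤ Cs ∧ 1 ≤ C₁ ∧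
      (∀ (μ : Measure (Pt n)), IsLocallyFiniteMeasure μ → IsDoubling μ Cd →
        ∀ (Q : Cube n), 0 < Q.side → ∀ f ∈ PC n D,
          (∀ x ∈ Q.toSet, |f x| ≤ 1) → (∃ x ∈ Q.toSet, 1 ≤ |f x|) →
          ∀ lam : ℝ, 0 < lam →
            μ {x | x ∈ Q.toSet ∧ |f x| ≤ lam} ≤
              ENNReal.ofReal (Cs * lam ^ θ) * μ Q.toSet) ∧
      (∀ (Q : Cube n), 0 < Q.side → ∀ f ∈ PC n D, (∀ x ∈ Q.toSet, |f x| ≤ 1) →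
        ∀ x y : Pt n, (∀ i, |x i - Q.center i| ≤ 3*Q.side/2) →
          (∀ i, |y i - Q.center i| ≤ 3*Q.side/2) →
          |f x - f y| ≤ C₁ / Q.side * dist x y) := by
  classical
  obtain ⟨γ, τ, C₁, hγhalf, hγlt, hτ4, hC₁, hKEY, hLIP⟩ := key_induction n D Cd hCd
  have hγpos : 0 < γ := by linarith
  have hτpos : 0 < τ := by linarith
  have hτ1 : 1 < τ := by linarith
  have hlogτ : 0 < Real.log τ := Real.log_pos hτ1
  have hlogγ : Real.log γ < 0 := Real.log_neg hγpos hγlt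
  set θ : ℝ := -Real.log γ / Real.log τ with hθdef
  have hθpos : 0 < θ := by
    rw [hθdef]
    apply div_pos (by linarith) hlogτ
  have hγrpow : τ ^ (-θ) = γ := by
    have hlogτne : Real.log τ ≠ 0 := ne_of_gt hlogτ
    rw [← Real.exp_log hτpos, ← Real.exp_mul]
    rw [hθdef]
    have hcomp : Real.log τ * -(-Real.log γ / Real.log τ) = Real.log γ := by
      field_simp
    rw [hcomp, Real.exp_log hγpos]
  set Cs : ℝ := Cd * 8 ^ θ with hCsdef
  have h8θ : (1:ℝ) ≤ 8 ^ θ := Real.one_le_rpow (by norm_num) (le_of_lt hθpos)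
  have hCs1 : 1 ≤ Cs := by
    rw [hCsdef]
    nlinarith
  refine ⟨θ, Cs, C₁, hθpos, hCs1, hC₁, ?_, ?_⟩
  swap
  · intro Q hs f hf hub
    exact (hLIP Q hs f hf hub).2
  intro μ hlf hμ Q hs f hfPC hub hxe lam hlam
  haveI := hlf
  have hQfin : μ Q.toSet ≠ ⊤ := (cube_measure_lt_top Q).ne
  rcases le_or_gt (1/8 : ℝ) lam with hbig | hsmalllam
  · -- trivial regime
    have h1 : (1:ℝ) ≤ Cs * lam ^ θ := by
      have hl8 : ((1:ℝ)/8) ^ θ ≤ lam ^ θ :=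
        Real.rpow_le_rpow (by norm_num) hbig (le_of_lt hθpos)
      have h2 : Cs * ((1:ℝ)/8) ^ θ = Cd * (8 ^ θ * (1/8) ^ θ) := by
        rw [hCsdef]; ring
      have h3 : (8:ℝ) ^ θ * (1/8) ^ θ = 1 := by
        rw [← Real.mul_rpow (by norm_num) (by norm_num)]
        norm_num
      have h4 : Cs * ((1:ℝ)/8) ^ θ = Cd := by rw [h2, h3]; ring
      calc (1:ℝ) ≤ Cd := hCd
        _ = Cs * ((1:ℝ)/8) ^ θ := h4.symm
        _ ≤ Cs * lam ^ θ := by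
            apply mul_le_mul_of_nonneg_left hl8 (by linarith)
    calc μ {x | x ∈ Q.toSet ∧ |f x| ≤ lam} ≤ μ Q.toSet :=
          measure_mono (fun x hx => hx.1)
      _ ≤ ENNReal.ofReal (Cs * lam ^ θ) * μ Q.toSet := by
          nth_rewrite 1 [← one_mul (μ Q.toSet)]
          apply mul_le_mul_left
          rw [show (1:ℝ≥0∞) = ENNReal.ofReal 1 by simp]
          exact ENNReal.ofReal_le_ofReal h1
  · -- main regime: find m
    have hτinvlt : τ⁻¹ < 1 := by
      rw [inv_lt_one₀ hτpos]
      exact hτ1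
    have hτinvpos : (0:ℝ) < τ⁻¹ := by positivity
    have hexm : ∃ m : ℕ, (1/8) * τ⁻¹^(m+1) < lam := by
      obtain ⟨N, hN⟩ := exists_pow_lt_of_lt_one (show (0:ℝ) < 8*lam by linarith) hτinvlt
      refine ⟨N, ?_⟩
      have h1 : τ⁻¹^(N+1) ≤ τ⁻¹^N := by
        apply pow_le_pow_of_le_one (le_of_lt hτinvpos) (le_of_lt hτinvlt)
        omega
      nlinarith
    set m := Nat.find hexm with hmdef
    have hmspec : (1/8) * τ⁻¹^(m+1) < lam := Nat.find_spec hexm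
    have hmupper : lam ≤ (1/8) * τ⁻¹^m := by
      rcases Nat.eq_zero_or_pos m with hm0 | hmpos
      · rw [hm0]
        simp only [pow_zero, mul_one]
        linarith
      · have := Nat.find_min hexm (show m - 1 < m by omega)
        push_neg at this
        have hexp : m - 1 + 1 = m := by omega
        rw [hexp] at this
        exact this
    -- dilated cube
    set Q2 := Q.dilate 2 with hQ2
    have hQ2side : Q2.side = 2 * Q.side := rfl
    have hQ2center : Q2.center = Q.center := rfl
    have hQ2pos : 0 < Q2.side := by rw [hQ2side]; linarith
    have hQsubQ2 : Q.toSet ⊆ Q2.toSet := by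
      intro x hx i
      rw [hQ2center, hQ2side]
      exact le_trans (hx i) (by linarith)
    have hQsubbox : Q.toSet ⊆ box Q2 := by
      intro x hx
      intro i
      have := hx i
      rw [abs_le] at this
      rw [hQ2center, hQ2side]
      constructor <;> [linarith [this.1]; linarith [this.2]]
    -- max on Q2
    have hcopy : f ∈ PC n D := hfPC
    obtain ⟨c, hc⟩ := hcopy
    have hcont : ContinuousOn (fun y => |f y|) Q2.toSet := by
      rw [hc]
      exact (L_continuous c).abs.continuousOn
    obtain ⟨xm, hxmQ2, hxmax⟩ := (cube_isCompact Q2).exists_isMaxOn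
      ⟨Q2.center, center_mem_toSet (le_of_lt hQ2pos)⟩ hcont
    set M2 := |f xm| with hM2
    have hub2 : ∀ y ∈ Q2.toSet, |f y| ≤ M2 := fun y hy => hxmax hy
    have hM21 : 1 ≤ M2 := by
      obtain ⟨x₀, hx₀Q, hx₀⟩ := hxe
      exact le_trans hx₀ (hub2 x₀ (hQsubQ2 hx₀Q))
    have hM2pos : 0 < M2 := by linarith
    set g : Pt n → ℝ := fun y => M2⁻¹ * f y with hg
    have hgPC : g ∈ PC n D := PC_smul hfPC M2⁻¹
    have hgub : ∀ y ∈ Q2.toSet, |g y| ≤ 1 := by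
      intro y hy
      rw [hg]
      simp only [abs_mul, abs_inv, abs_of_pos hM2pos]
      rw [inv_mul_le_iff₀ hM2pos, mul_one]
      exact hub2 y hy
    have hgex : ∃ y ∈ Q2.toSet, 1 ≤ |g y| := by
      refine ⟨xm, hxmQ2, ?_⟩
      rw [hg]
      simp only [abs_mul, abs_inv, abs_of_pos hM2pos]
      rw [← hM2, inv_mul_cancel₀ (ne_of_gt hM2pos)]
    have hEsub : {x | x ∈ Q.toSet ∧ |f x| ≤ lam} ⊆ {x | x ∈ box Q2 ∧ |g x| ≤ lam} := by
      rintro x ⟨hxQ, hxlam⟩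
      refine ⟨hQsubbox hxQ, ?_⟩
      rw [hg]
      simp only [abs_mul, abs_inv, abs_of_pos hM2pos]
      calc M2⁻¹ * |f x| ≤ 1 * |f x| := by
            apply mul_le_mul_of_nonneg_right _ (abs_nonneg _)
            rw [inv_le_one₀ hM2pos]
            exact hM21
        _ = |f x| := one_mul _
        _ ≤ lam := hxlam
    have hkey := hKEY μ hlf hμ m Q2 hQ2pos g hgPC hgub hgex lam (le_of_lt hlam) hmupper
    -- power bound: γ^(m+1) ≤ 8^θ * lam^θ
    have hpow : γ^(m+1) ≤ 8 ^ θ * lam ^ θ := by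
      have h1 : γ^(m+1) = (τ^(-θ))^(m+1) := by rw [hγrpow]
      have h2 : (τ^(-θ) : ℝ)^(m+1) = (τ^(-((m:ℝ)+1)))^θ := by
        rw [← Real.rpow_natCast (τ^(-θ)) (m+1), ← Real.rpow_mul (le_of_lt hτpos),
          ← Real.rpow_mul (le_of_lt hτpos)]
        push_cast
        ring_nf
      have h3 : (τ:ℝ)^(-((m:ℝ)+1)) = τ⁻¹^(m+1) := by
        rw [← Real.rpow_neg_one τ, ← Real.rpow_natCast (τ ^ (-1:ℝ)) (m+1),
          ← Real.rpow_mul (le_of_lt hτpos)]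
        push_cast
        ring_nf
      have h4 : τ⁻¹^(m+1) < 8 * lam := by nlinarith
      have h5 : ((τ:ℝ)⁻¹^(m+1) : ℝ) ^ θ ≤ (8*lam) ^ θ := by
        apply Real.rpow_le_rpow (by positivity) (le_of_lt h4) (le_of_lt hθpos)
      have h6 : ((8:ℝ)*lam) ^ θ = 8^θ * lam^θ :=
        Real.mul_rpow (by norm_num) (le_of_lt hlam)
      calc γ^(m+1) = (τ⁻¹^(m+1)) ^ θ := by rw [h1, h2, h3]
        _ ≤ (8*lam)^θ := h5
        _ = 8^θ * lam^θ := h6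
    calc μ {x | x ∈ Q.toSet ∧ |f x| ≤ lam}
        ≤ μ {x | x ∈ box Q2 ∧ |g x| ≤ lam} := measure_mono hEsub
      _ ≤ ENNReal.ofReal γ^(m+1) * μ (box Q2) := hkey
      _ ≤ ENNReal.ofReal γ^(m+1) * (ENNReal.ofReal Cd * μ Q.toSet) := by
          apply mul_le_mul_right
          calc μ (box Q2) ≤ μ Q2.toSet := measure_mono (box_subset_toSet Q2)
            _ ≤ ENNReal.ofReal Cd * μ Q.toSet := hμ Q hs
      _ = ENNReal.ofReal (γ^(m+1)) * ENNReal.ofReal Cd * μ Q.toSet := by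
          rw [← ENNReal.ofReal_pow (le_of_lt hγpos)]
          ring
      _ ≤ ENNReal.ofReal (Cs * lam ^ θ) * μ Q.toSet := by
          apply mul_le_mul_left
          rw [← ENNReal.ofReal_mul (by positivity)]
          apply ENNReal.ofReal_le_ofReal
          calc γ^(m+1) * Cd ≤ (8^θ * lam^θ) * Cd := by
                apply mul_le_mul_of_nonneg_right hpow (by linarith)
            _ = Cs * lam ^ θ := by rw [hCsdef]; ring

end Sub

section Final

open MeasureTheory

lemma mvpoly_mem_PC {P : MvPolynomial (Fin n) ℝ} (hdeg : P.totalDegree < D + 1) :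
    (fun x : Pt n => MvPolynomial.eval (fun i => x i) P) ∈ PC n D := by
  classical
  have hsupp : ∀ d ∈ P.support, ∀ i, d i < D + 1 := by
    intro d hd i
    have h1 : (d.sum fun _ e => e) ≤ P.totalDegree := MvPolynomial.le_totalDegree hd
    have h2 : d i ≤ d.sum fun _ e => e := by
      by_cases hi : i ∈ d.support
      · exact Finset.single_le_sum (f := fun a => d a) (fun _ _ => Nat.zero_le _) hi
      · simp [Finsupp.notMem_support_iff.mp hi]
    omega
  refine ⟨fun β => P.coeff (fs β), ?_⟩
  funext x
  rw [MvPolynomial.eval_eq']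
  rw [L]
  have hstep1 : ∑ β : Idx n D, P.coeff (fs β) * mono β x
      = ∑ m ∈ Finset.univ.image (fs (n := n) (D := D)), P.coeff m * ∏ i, x i ^ m i := by
    rw [Finset.sum_image (fun β _ β' _ h => fs_injective h)]
    apply Finset.sum_congr rfl
    intro β _
    rfl
  have hsub : P.support ⊆ Finset.univ.image (fs (n := n) (D := D)) := by
    intro d hd
    rw [Finset.mem_image]
    refine ⟨fun i => ⟨d i, hsupp d hd i⟩, Finset.mem_univ _, ?_⟩
    apply Finsupp.ext
    intro i
    rfl
  have hzero : ∀ m ∈ Finset.univ.image (fs (n := n) (D := D)), m ∉ P.support →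
      P.coeff m * ∏ i, x i ^ m i = 0 := by
    intro m _ hm
    rw [MvPolynomial.notMem_support_iff.mp hm]
    ring
  rw [hstep1, ← Finset.sum_subset hsub hzero]

lemma frontier_cube_subset (Q : Cube n) :
    frontier Q.toSet ⊆ {z : Pt n | z ∈ Q.toSet ∧ ∃ i, |z i - Q.center i| = Q.side/2} := by
  intro z hz
  have hzQ : z ∈ Q.toSet := by
    have h1 : z ∈ closure Q.toSet := frontier_subset_closure hz
    rwa [IsClosed.closure_eq (cube_isClosed Q)] at h1
  refine ⟨hzQ, ?_⟩
  by_contra hcon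
  push_neg at hcon
  have hstrict : ∀ i, |z i - Q.center i| < Q.side/2 := fun i =>
    lt_of_le_of_ne (hzQ i) (hcon i)
  have hopen : IsOpen {x : Pt n | ∀ i, |x i - Q.center i| < Q.side/2} := by
    have : {x : Pt n | ∀ i, |x i - Q.center i| < Q.side/2}
        = ⋂ i, {x : Pt n | |x i - Q.center i| < Q.side/2} := by
      ext x; simp [Set.mem_iInter]
    rw [this]
    apply isOpen_iInter_of_finite
    intro i
    exact isOpen_lt (((EuclideanSpace.proj (𝕜 := ℝ) i).continuous.sub
      continuous_const).abs) continuous_const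
  have hsubint : {x : Pt n | ∀ i, |x i - Q.center i| < Q.side/2} ⊆ interior Q.toSet := by
    apply interior_maximal _ hopen
    intro x hx i
    exact le_of_lt (hx i)
  exact hz.2 (hsubint hstrict)

lemma degenerate_measure {Cd : ℝ} (hCd : Cd < 1) {μ : Measure (Pt n)}
    [IsLocallyFiniteMeasure μ] (hμ : IsDoubling μ Cd) (A : Set (Pt n)) : μ A = 0 := by
  have hcube : ∀ Q : Cube n, 0 < Q.side → μ Q.toSet = 0 := by
    intro Q hs
    by_contra hne
    have hsub2 : Q.toSet ⊆ (Q.dilate 2).toSet := by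
      intro x hx i
      show |x i - Q.center i| ≤ (2*Q.side)/2
      exact le_trans (hx i) (by linarith)
    have h2Qne : μ (Q.dilate 2).toSet ≠ 0 := by
      intro h0
      exact hne (le_antisymm (le_trans (measure_mono hsub2) (le_of_eq h0)) (by positivity))
    have hfin : μ (Q.dilate 2).toSet ≠ ⊤ := (cube_measure_lt_top _).ne
    have h2 : μ (Q.dilate 2).toSet ≤ ENNReal.ofReal Cd * μ (Q.dilate 2).toSet :=
      le_trans (hμ Q hs) (mul_le_mul_right (measure_mono hsub2) _)
    have hlt1 : ENNReal.ofReal Cd < 1 := ENNReal.ofReal_lt_one.mpr hCd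
    have hstrict : ENNReal.ofReal Cd * μ (Q.dilate 2).toSet <
        1 * μ (Q.dilate 2).toSet := by
      exact ENNReal.mul_lt_mul_left h2Qne hfin hlt1
    rw [one_mul] at hstrict
    exact absurd h2 (not_le.mpr hstrict)
  have hU : (Set.univ : Set (Pt n)) ⊆
      ⋃ k : ℕ, (Cube.mk (0 : Pt n) (2*((k:ℝ)+1))).toSet := by
    intro x _
    obtain ⟨k, hk⟩ := exists_nat_ge (dist x 0)
    rw [Set.mem_iUnion]
    refine ⟨k, fun i => ?_⟩
    show |x i - (0 : Pt n) i| ≤ (2*((k:ℝ)+1))/2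
    have h1 : |x i - (0 : Pt n) i| ≤ dist x 0 := abs_coord_le_dist x 0 i
    have : (2*((k:ℝ)+1))/2 = (k:ℝ)+1 := by ring
    rw [this]
    linarith
  have hUnull : μ (⋃ k : ℕ, (Cube.mk (0 : Pt n) (2*((k:ℝ)+1))).toSet) = 0 := by
    apply measure_iUnion_null
    intro k
    exact hcube _ (by positivity)
  refine le_antisymm ?_ zero_le
  calc μ A ≤ μ (Set.univ) := measure_mono (Set.subset_univ A)
    _ ≤ μ (⋃ k : ℕ, (Cube.mk (0 : Pt n) (2*((k:ℝ)+1))).toSet) := measure_mono hU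
    _ = 0 := hUnull

end Final

end Halo


set_option maxHeartbeats 2000000 in
/-- For a doubling measure `μ` on `ℝⁿ`, the `δ`-halo (at the scale of `Q`)
of the zero set of a `Q`-normalized polynomial of degree `< κ` has power decay:
`|Q ∩ Z_δ|_μ ≤ C_{n,κ} δ^θ |Q|_μ` for constants `θ, C_{n,κ} > 0` depending only on `n`, `κ`
and the doubling constant of `μ` (not on the polynomial).  In particular the same power
decay holds for the halo of the boundary `∂Q`. -/
theorem halo_power_decay (n κ : ℕ) (hκ : 1 ≤ κ) (Cd : ℝ) :
    ∃ θ C : ℝ, 0 < θ ∧ 0 < C ∧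
      ∀ μ : Measure (Pt n), IsLocallyFiniteMeasure μ → IsDoubling μ Cd →
      ∀ Q : Cube n, 0 < Q.side →
        (∀ P : MvPolynomial (Fin n) ℝ, P.totalDegree < κ →
          (∀ x ∈ Q.toSet, |MvPolynomial.eval (fun i => x i) P| ≤ 1) →
          (∃ x ∈ Q.toSet, |MvPolynomial.eval (fun i => x i) P| = 1) →
          ∀ δ : ℝ, 0 < δ → δ < 1 →
            μ (Q.toSet ∩ {y : Pt n | ∃ z : Pt n,
                MvPolynomial.eval (fun i => z i) P = 0 ∧ dist y z < δ * Q.side}) ≤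
              ENNReal.ofReal (C * δ ^ θ) * μ Q.toSet) ∧
        (∀ δ : ℝ, 0 < δ → δ < 1 →
          μ (Q.toSet ∩ {y : Pt n | ∃ z ∈ frontier Q.toSet, dist y z < δ * Q.side}) ≤
            ENNReal.ofReal (C * δ ^ θ) * μ Q.toSet) := by
  classical
  rcases lt_or_ge Cd 1 with hCd | hCd
  · -- degenerate: the measure must vanish
    refine ⟨1, 1, one_pos, one_pos, ?_⟩
    intro μ hlf hμ Q hQ
    haveI := hlf
    constructor
    · intro P hdeg hub hex δ hδ0 hδ1
      rw [Halo.degenerate_measure hCd hμ _]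
      exact zero_le
    · intro δ hδ0 hδ1
      rw [Halo.degenerate_measure hCd hμ _]
      exact zero_le
  · obtain ⟨θ, Cs, C₁, hθpos, hCs1, hC₁1, hSUB, hLIP⟩ := Halo.sublevel_bound n κ Cd hCd
    have hC₁θ : 1 ≤ C₁ ^ θ := Real.one_le_rpow hC₁1 (le_of_lt hθpos)
    set Cf : ℝ := (2*(n:ℝ)+2) * Cs * C₁ ^ θ with hCf
    have h2n : (1:ℝ) ≤ 2*(n:ℝ)+2 := by
      have := Nat.cast_nonneg (α := ℝ) n
      linarith
    have hCfpos : 0 < Cf := by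
      rw [hCf]
      have ha : (0:ℝ) < C₁^θ := lt_of_lt_of_le zero_lt_one hC₁θ
      have hb : (0:ℝ) < Cs := lt_of_lt_of_le zero_lt_one hCs1
      exact mul_pos (mul_pos (by linarith) hb) ha
    refine ⟨θ, Cf, hθpos, hCfpos, ?_⟩
    intro μ hlf hμ Q hQ
    haveI := hlf
    constructor
    · -- polynomial clause
      intro P hdeg hub hex δ hδ0 hδ1
      set f : Pt n → ℝ := fun x => MvPolynomial.eval (fun i => x i) P with hf
      have hfPC : f ∈ Halo.PC n κ := Halo.mvpoly_mem_PC (by omega)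
      have hub' : ∀ x ∈ Q.toSet, |f x| ≤ 1 := hub
      have hex' : ∃ x ∈ Q.toSet, 1 ≤ |f x| := by
        obtain ⟨x, hx, he⟩ := hex
        exact ⟨x, hx, he.ge⟩
      have hlip := hLIP Q hQ f hfPC hub'
      have hincl : Q.toSet ∩ {y : Pt n | ∃ z : Pt n,
          MvPolynomial.eval (fun i => z i) P = 0 ∧ dist y z < δ * Q.side}
          ⊆ {x | x ∈ Q.toSet ∧ |f x| ≤ C₁ * δ} := by
        rintro y ⟨hyQ, z, hz0, hzd⟩
        refine ⟨hyQ, ?_⟩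
        have hy3 : ∀ i, |y i - Q.center i| ≤ 3*Q.side/2 := fun i =>
          le_trans (hyQ i) (by linarith)
        have hz3 : ∀ i, |z i - Q.center i| ≤ 3*Q.side/2 := by
          intro i
          have h1 : |z i - y i| ≤ dist z y := Halo.abs_coord_le_dist z y i
          have h2 : dist z y = dist y z := dist_comm z y
          have h3 := hyQ i
          have h4 : |z i - Q.center i| ≤ |z i - y i| + |y i - Q.center i| := by
            calc |z i - Q.center i| = |(z i - y i) + (y i - Q.center i)| := by ring_nf
              _ ≤ |z i - y i| + |y i - Q.center i| := abs_add_le _ _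
          have h5 : dist y z < δ * Q.side := hzd
          have h6 : δ * Q.side ≤ Q.side := by nlinarith
          linarith
        have hfz : f z = 0 := hz0
        calc |f y| = |f y - f z| := by rw [hfz, sub_zero]
          _ ≤ C₁ / Q.side * dist y z := hlip y z hy3 hz3
          _ ≤ C₁ / Q.side * (δ * Q.side) :=
              mul_le_mul_of_nonneg_left (le_of_lt hzd) (by positivity)
          _ = C₁ * δ := by field_simp
      have hsubl := hSUB μ hlf hμ Q hQ f hfPC hub' hex' (C₁ * δ) (by positivity)
      have hconst : Cs * (C₁*δ)^θ ≤ Cf * δ^θ := by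
        rw [Real.mul_rpow (by linarith) (le_of_lt hδ0)]
        have hδθ : (0:ℝ) ≤ δ^θ := Real.rpow_nonneg (le_of_lt hδ0) θ
        rw [hCf]
        have hX : (0:ℝ) ≤ Cs * (C₁^θ * δ^θ) :=
          mul_nonneg (by linarith) (mul_nonneg (by linarith) hδθ)
        nlinarith [mul_nonneg hX (sub_nonneg.mpr h2n)]
      calc μ (Q.toSet ∩ {y : Pt n | ∃ z : Pt n,
            MvPolynomial.eval (fun i => z i) P = 0 ∧ dist y z < δ * Q.side})
          ≤ μ {x | x ∈ Q.toSet ∧ |f x| ≤ C₁*δ} := measure_mono hincl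
        _ ≤ ENNReal.ofReal (Cs * (C₁*δ)^θ) * μ Q.toSet := hsubl
        _ ≤ ENNReal.ofReal (Cf * δ^θ) * μ Q.toSet :=
            mul_le_mul_left (ENNReal.ofReal_le_ofReal hconst) _
    · -- boundary clause
      intro δ hδ0 hδ1
      set s := Q.side with hsd
      have hs0 : (0:ℝ) < s := hQ
      set e : Bool → ℝ := fun σ => if σ then 1/2 else -(1/2) with hedef
      have habse : ∀ σ, |e σ| = 1/2 := by
        intro σ
        by_cases hσ : σ <;> simp [hedef, hσ, abs_of_nonneg, abs_of_nonpos]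
      set ff : Fin n → Bool → Pt n → ℝ :=
        fun i σ x => (x i - Q.center i)/s + e σ with hffdef
      have hffPC : ∀ i σ, ff i σ ∈ Halo.PC n κ := by
        intro i σ
        set βi : Halo.Idx n κ := fun j => if j = i then (⟨1, by omega⟩ : Fin (κ+1))
          else ⟨0, by omega⟩ with hβi
        set β0 : Halo.Idx n κ := fun _ => (⟨0, by omega⟩ : Fin (κ+1)) with hβ0
        have hmono_i : ∀ x : Pt n, Halo.mono βi x = x i := by
          intro x
          rw [Halo.mono]
          rw [Finset.prod_eq_single i]
          · simp [hβi]
          · intro j _ hne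
            simp [hβi, hne]
          · intro h
            exact absurd (Finset.mem_univ i) h
        have hmono_0 : ∀ x : Pt n, Halo.mono β0 x = 1 := by
          intro x
          rw [Halo.mono]
          apply Finset.prod_eq_one
          intro j _
          simp [hβ0]
        have h1 := Halo.PC_add
          (Halo.PC_smul (Halo.mono_mem βi) s⁻¹)
          (Halo.PC_smul (Halo.mono_mem β0) (-(Q.center i)/s + e σ))
        have heq : ff i σ = fun x => s⁻¹ * Halo.mono βi x +
            (-(Q.center i)/s + e σ) * Halo.mono β0 x := by
          funext x
          rw [hmono_i, hmono_0, hffdef]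
          simp only [mul_one]
          field_simp
          ring
        rw [heq]
        exact h1
      have hffub : ∀ i σ, ∀ x ∈ Q.toSet, |ff i σ x| ≤ 1 := by
        intro i σ x hx
        have h1 := hx i
        have h2 : |x i - Q.center i|/s ≤ (1:ℝ)/2 := by
          rw [div_le_iff₀ hs0]
          calc |x i - Q.center i| ≤ s/2 := h1
            _ = 1/2 * s := by ring
        calc |ff i σ x| ≤ |(x i - Q.center i)/s| + |e σ| := abs_add_le _ _
          _ = |x i - Q.center i|/s + 1/2 := by
              rw [abs_div, abs_of_pos hs0, habse]
          _ ≤ 1/2 + 1/2 := by linarith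
          _ = 1 := by norm_num
      have hffex : ∀ i σ, ∃ x ∈ Q.toSet, 1 ≤ |ff i σ x| := by
        intro i σ
        set w : Pt n := WithLp.toLp 2 (fun j => if j = i then Q.center i + s * e σ else Q.center j :
          Fin n → ℝ) with hw
        have hwi : w i = Q.center i + s * e σ := by rw [hw]; simp
        have hwQ : w ∈ Q.toSet := by
          intro j
          by_cases hj : j = i
          · subst hj
            have hval : w j - Q.center j = s * e σ := by rw [hwi]; ring
            rw [hval, abs_mul, abs_of_pos hs0, habse]
            linarith
          · have hval : w j - Q.center j = 0 := by
              have h2 : w j = Q.center j := by rw [hw]; simp [hj]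
              rw [h2]; ring
            rw [hval, abs_zero]
            linarith
        refine ⟨w, hwQ, ?_⟩
        have hval : ff i σ w = 2 * e σ := by
          show (w i - Q.center i)/s + e σ = 2 * e σ
          rw [hwi]
          have h2 : Q.center i + s * e σ - Q.center i = s * e σ := by ring
          rw [h2]
          have hsne' : s ≠ 0 := ne_of_gt hs0
          field_simp
          ring
        rw [hval, abs_mul, habse]
        norm_num
      have hdiff : ∀ (i : Fin n) (σ : Bool) (y z : Pt n),
          ff i σ y - ff i σ z = (y i - z i)/s := by
        intro i σ y z
        show ((y i - Q.center i)/s + e σ) - ((z i - Q.center i)/s + e σ) = (y i - z i)/s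
        ring
      have hincl : Q.toSet ∩ {y : Pt n | ∃ z ∈ frontier Q.toSet, dist y z < δ * Q.side}
          ⊆ ⋃ (p : Fin n × Bool), {x | x ∈ Q.toSet ∧ |ff p.1 p.2 x| ≤ δ} := by
        rintro y ⟨hyQ, z, hzf, hzd⟩
        obtain ⟨hzQ, i, habs⟩ := Halo.frontier_cube_subset Q hzf
        have hfinal : ∀ σ : Bool, ff i σ z = 0 →
            y ∈ ⋃ (p : Fin n × Bool), {x | x ∈ Q.toSet ∧ |ff p.1 p.2 x| ≤ δ} := by
          intro σ hz0
          apply Set.mem_iUnion.mpr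
          refine ⟨(i, σ), hyQ, ?_⟩
          calc |ff i σ y| = |ff i σ y - ff i σ z| := by rw [hz0, sub_zero]
            _ = |(y i - z i)/s| := by rw [hdiff]
            _ = |y i - z i|/s := by rw [abs_div, abs_of_pos hs0]
            _ ≤ dist y z / s := by
                rw [div_eq_mul_inv, div_eq_mul_inv]
                exact mul_le_mul_of_nonneg_right (Halo.abs_coord_le_dist y z i)
                  (le_of_lt (inv_pos.mpr hs0))
            _ ≤ δ := by
                rw [div_le_iff₀ hs0]
                have : δ * Q.side = δ * s := rfl
                linarith [hzd]
        have hsne : s ≠ 0 := ne_of_gt hs0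
        rcases (abs_eq (by positivity : (0:ℝ) ≤ Q.side/2)).mp habs with hpos | hneg
        · apply hfinal false
          show (z i - Q.center i)/s + e false = 0
          have h2 : e false = -(1/2) := by simp [hedef]
          rw [hpos, h2, ← hsd]
          field_simp
          ring
        · apply hfinal true
          show (z i - Q.center i)/s + e true = 0
          have h2 : e true = 1/2 := by simp [hedef]
          rw [hneg, h2, ← hsd]
          field_simp
          ring
      have hperface : ∀ p : Fin n × Bool,
          μ {x | x ∈ Q.toSet ∧ |ff p.1 p.2 x| ≤ δ} ≤
            ENNReal.ofReal (Cs * δ^θ) * μ Q.toSet := fun p =>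
        hSUB μ hlf hμ Q hQ (ff p.1 p.2) (hffPC p.1 p.2) (hffub p.1 p.2) (hffex p.1 p.2) δ hδ0
      have hδθ : (0:ℝ) ≤ δ^θ := Real.rpow_nonneg (le_of_lt hδ0) θ
      calc μ (Q.toSet ∩ {y : Pt n | ∃ z ∈ frontier Q.toSet, dist y z < δ * Q.side})
          ≤ μ (⋃ (p : Fin n × Bool), {x | x ∈ Q.toSet ∧ |ff p.1 p.2 x| ≤ δ}) :=
            measure_mono hincl
        _ ≤ ∑' (p : Fin n × Bool), μ {x | x ∈ Q.toSet ∧ |ff p.1 p.2 x| ≤ δ} :=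
            measure_iUnion_le _
        _ ≤ ∑' (_p : Fin n × Bool), ENNReal.ofReal (Cs * δ^θ) * μ Q.toSet :=
            ENNReal.tsum_le_tsum hperface
        _ = ((2*n : ℕ) : ℝ≥0∞) * (ENNReal.ofReal (Cs * δ^θ) * μ Q.toSet) := by
            rw [tsum_fintype, Finset.sum_const, Finset.card_univ, nsmul_eq_mul]
            congr 1
            have : Fintype.card (Fin n × Bool) = 2*n := by
              rw [Fintype.card_prod, Fintype.card_fin, Fintype.card_bool]
              ring
            rw [this]
        _ ≤ ENNReal.ofReal (Cf * δ^θ) * μ Q.toSet := by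
            rw [← mul_assoc, ← ENNReal.ofReal_natCast (2*n),
              ← ENNReal.ofReal_mul (by positivity)]
            apply mul_le_mul_left
            apply ENNReal.ofReal_le_ofReal
            push_cast
            rw [hCf]
            have hCsnn : (0:ℝ) ≤ Cs := by linarith
            have hC₁θ0 : (0:ℝ) ≤ C₁^θ := by linarith
            have h1 : (0:ℝ) ≤ (2*(n:ℝ)) * (Cs*δ^θ) * (C₁^θ - 1) := by
              apply mul_nonneg (mul_nonneg (by positivity) (mul_nonneg hCsnn hδθ))
              linarith
            have h2 : (0:ℝ) ≤ 2 * (Cs*δ^θ) * C₁^θ :=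
              mul_nonneg (by positivity) hC₁θ0
            nlinarith [h1, h2]
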